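/- arXiv:2007.12840 — 6 statements merged into one kernel-verified Lean document; each statement's English description precedes it below -/
import Mathlib

section
/- Let f : 𝔻 → 𝔻 be an analytic function on the unit disk with a zero of order p ≥ 1 at the origin (i.e., f(0) = f'(0) = ⋯ = f^{(p-1)}(0) = 0 and f^{(p)}(0) ≠ 0). Then for every z ∈ 𝔻, |f(z)| ≤ |z|^p · (|z| + |a_p|)/(1 + |a_p||z|), where a_p = f^{(p)}(0)/p!. -/
open Complex Metric Real

open Function FormalMultilinearSeries in
private lemma schwarz_aux_key_ineq (a x : ℂ) (ha : ‖a‖ ≤ 1)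
    (hx : ‖x‖ ≤ 1) :
    ‖x + a‖ * (1 + ‖a‖ * ‖x‖) ≤
      (‖x‖ + ‖a‖) * ‖1 + (starRingEnd ℂ) a * x‖ := by
  set A := ‖a‖ with hA
  set X := ‖x‖ with hX
  have hA0 : 0 ≤ A := norm_nonneg a
  have hX0 : 0 ≤ X := norm_nonneg x
  set S : ℝ := (x * (starRingEnd ℂ) a).re with hS
  have hSle : S ≤ A * X := by
    have h := Complex.re_le_norm (x * (starRingEnd ℂ) a)
    rw [norm_mul, Complex.norm_conj] at h
    exact h.trans_eq (mul_comm _ _)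
  have h1 : (‖x + a‖) ^ 2 = X ^ 2 + A ^ 2 + 2 * S := by
    rw [Complex.sq_norm, Complex.normSq_add, ← Complex.sq_norm, ← Complex.sq_norm]
  have h2 : (‖1 + (starRingEnd ℂ) a * x‖) ^ 2 = 1 + A ^ 2 * X ^ 2 + 2 * S := by
    rw [Complex.sq_norm, Complex.normSq_add]
    have e1 : Complex.normSq 1 = 1 := by simp
    have e2 : Complex.normSq ((starRingEnd ℂ) a * x) = A ^ 2 * X ^ 2 := by
      rw [Complex.normSq_mul, Complex.normSq_conj, ← Complex.sq_norm, ← Complex.sq_norm]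
    have e3 : ((1 : ℂ) * (starRingEnd ℂ) ((starRingEnd ℂ) a * x)).re = S := by
      rw [one_mul, map_mul, Complex.conj_conj, hS,
        show a * (starRingEnd ℂ) x = (starRingEnd ℂ) (x * (starRingEnd ℂ) a) by
          rw [map_mul, Complex.conj_conj]; ring,
        Complex.conj_re]
    rw [e1, e2, e3]
  have hRnn : 0 ≤ (X + A) * ‖1 + (starRingEnd ℂ) a * x‖ :=
    mul_nonneg (by linarith) (norm_nonneg _)
  refine le_of_pow_le_pow_left₀ (n := 2) two_ne_zero hRnn ?_
  rw [mul_pow, mul_pow, h1, h2]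
  have hfac : 0 ≤ (A * X - S) * ((1 - A ^ 2) * (1 - X ^ 2)) := by
    apply mul_nonneg (by linarith)
    apply mul_nonneg <;> nlinarith
  nlinarith [hfac, sq_nonneg (A * X - S), sq_nonneg (A + X), sq_nonneg (A - X)]

private lemma schwarz_aux_mono (A H Z : ℝ) (hA0 : 0 ≤ A) (hA1 : A ≤ 1)
    (hH0 : 0 ≤ H) (hHZ : H ≤ Z) :
    (H + A) / (1 + A * H) ≤ (Z + A) / (1 + A * Z) := by
  have h1 : 0 < 1 + A * H := by nlinarith
  have h2 : 0 < 1 + A * Z := by nlinarith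
  rw [div_le_div_iff₀ h1 h2]
  have hA2 : A * A ≤ 1 := by nlinarith
  nlinarith [mul_nonneg (sub_nonneg.mpr hHZ) (sub_nonneg.mpr hA2)]

theorem schwarz_zero_order_p
    (f : ℂ → ℂ) (p : ℕ) (hp : 1 ≤ p)
    (hf : DifferentiableOn ℂ f (ball (0:ℂ) 1))
    (hmaps : ∀ z ∈ ball (0:ℂ) 1, f z ∈ ball (0:ℂ) 1)
    (hzero : ∀ k < p, iteratedDeriv k f 0 = 0)
    (hpne : iteratedDeriv p f 0 ≠ 0) :
    ∀ z ∈ ball (0:ℂ) 1,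
      ‖f z‖ ≤ (‖z‖) ^ p *
        ((‖z‖ + ‖iteratedDeriv p f 0‖ / (p.factorial : ℝ)) /
          (1 + (‖iteratedDeriv p f 0‖ / (p.factorial : ℝ)) * ‖z‖)) := by
  classical
  set g : ℂ → ℂ := (Function.swap dslope (0:ℂ))^[p] f with hgdef
  have hfa : AnalyticAt ℂ f 0 := hf.analyticAt (isOpen_ball.mem_nhds (mem_ball_self one_pos))
  obtain ⟨q, hq⟩ := hfa
  have hgk : ∀ k : ℕ, HasFPowerSeriesAt ((Function.swap dslope (0:ℂ))^[k] f)
      (FormalMultilinearSeries.fslope^[k] q) 0 :=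
    fun k => hq.has_fpower_series_iterate_dslope_fslope k
  -- coefficients vs iterated derivatives
  have hcoeff : ∀ n : ℕ, (n.factorial : ℂ) * q.coeff n = iteratedDeriv n f 0 := by
    intro n
    obtain ⟨r, hr⟩ := hq
    have h := hr.factorial_smul (1 : ℂ) n
    rw [iteratedDeriv_eq_iteratedFDeriv]
    rw [← h, FormalMultilinearSeries.apply_eq_pow_smul_coeff, one_pow, one_smul, nsmul_eq_mul]
  have hq0 : ∀ k < p, q.coeff k = 0 := by
    intro k hk
    have h := hcoeff k
    rw [hzero k hk] at h
    exact (mul_eq_zero.mp h).resolve_left (Nat.cast_ne_zero.mpr k.factorial_ne_zero)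
  -- value at 0 of iterated dslope
  have hval : ∀ k : ℕ, (Function.swap dslope (0:ℂ))^[k] f 0 = q.coeff k := by
    intro k
    have h := (hgk k).coeff_zero 1
    rw [show ((FormalMultilinearSeries.fslope^[k] q) 0 1 =
        (FormalMultilinearSeries.fslope^[k] q).coeff 0) from rfl,
      FormalMultilinearSeries.coeff_iterate_fslope, zero_add] at h
    exact h.symm
  have hg0 : g 0 = q.coeff p := hval p
  have hf0 : f 0 = 0 := by
    have h := hzero 0 hp
    rwa [iteratedDeriv_zero] at h
  -- g z = f z / z ^ p off 0
  have hgmain : ∀ k ≤ p, ∀ z : ℂ, z ≠ 0 →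
      (Function.swap dslope (0:ℂ))^[k] f z = f z / z ^ k := by
    intro k hk
    induction k with
    | zero => intro z hz; simp
    | succ k ih =>
      intro z hz
      have hk' : k ≤ p := Nat.le_of_succ_le hk
      have h0 : (Function.swap dslope (0:ℂ))^[k] f 0 = 0 := by
        rw [hval k]; exact hq0 k (Nat.lt_of_succ_le hk)
      rw [Function.iterate_succ_apply']
      have : Function.swap dslope 0 ((Function.swap dslope (0:ℂ))^[k] f) z =
          dslope ((Function.swap dslope (0:ℂ))^[k] f) 0 z := rfl
      rw [this, dslope_of_ne _ hz, slope_def_field, ih hk' z hz, h0, sub_zero, sub_zero,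
        div_div, ← pow_succ]
  have hgz : ∀ z : ℂ, z ≠ 0 → g z = f z / z ^ p := fun z hz => hgmain p le_rfl z hz
  have hfz : ∀ z : ℂ, f z = z ^ p * g z := by
    intro z
    rcases eq_or_ne z 0 with rfl | hz
    · rw [hf0, zero_pow (by omega : p ≠ 0), zero_mul]
    · rw [hgz z hz]; field_simp
  -- differentiability of g
  have hgdiff : DifferentiableOn ℂ g (ball (0:ℂ) 1) := by
    intro z hz
    rcases eq_or_ne z 0 with rfl | hz0
    · exact (hgk p).analyticAt.differentiableAt.differentiableWithinAt
    · have h1 : DifferentiableAt ℂ (fun w => f w / w ^ p) z := by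
        have hfd : DifferentiableAt ℂ f z := hf.differentiableAt (isOpen_ball.mem_nhds hz)
        exact hfd.div ((differentiableAt_id.pow p)) (pow_ne_zero p hz0)
      have h2 : g =ᶠ[nhds z] fun w => f w / w ^ p := by
        filter_upwards [compl_singleton_mem_nhds hz0] with w hw
        exact hgz w hw
      exact (h1.congr_of_eventuallyEq h2).differentiableWithinAt
  -- |g| ≤ 1 on the ball
  have hgle : ∀ z ∈ ball (0:ℂ) 1, ‖g z‖ ≤ 1 := by
    intro z hz
    rw [mem_ball_zero_iff] at hz
    have key : ∀ r : ℝ, ‖z‖ < r → r < 1 → ‖g z‖ ≤ 1 / r ^ p := by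
      intro r hzr hr1
      have hr0 : 0 < r := lt_of_le_of_lt (norm_nonneg z) hzr
      have hfr : ∀ w ∈ frontier (ball (0:ℂ) r), ‖g w‖ ≤ 1 / r ^ p := by
        intro w hw
        rw [frontier_ball _ hr0.ne'] at hw
        have hw' : ‖w‖ = r := by
          simpa using mem_sphere_zero_iff_norm.mp hw
        have hwb : w ∈ ball (0:ℂ) 1 := by
          rw [mem_ball_zero_iff, hw']; exact hr1
        have hfw : ‖f w‖ < 1 := by
          have := hmaps w hwb
          rwa [mem_ball_zero_iff] at this
        have hw0 : w ≠ 0 := by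
          intro hh; rw [hh, norm_zero] at hw'; exact hr0.ne' hw'.symm
        rw [hgz w hw0, norm_div, norm_pow, hw']
        exact div_le_div₀ zero_le_one hfw.le (pow_pos hr0 p) le_rfl
      have hdc : DiffContOnCl ℂ g (ball (0:ℂ) r) := by
        apply DifferentiableOn.diffContOnCl
        apply hgdiff.mono
        rw [closure_ball _ hr0.ne']
        exact closedBall_subset_ball hr1
      have := Complex.norm_le_of_forall_mem_frontier_norm_le isBounded_ball hdc hfr
        (subset_closure (mem_ball_zero_iff.mpr hzr))
      exact this
    have h1 : Filter.Tendsto (fun r : ℝ => 1 / r ^ p) (nhdsWithin 1 (Set.Iio 1)) (nhds 1) := by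
      have hc : ContinuousAt (fun r : ℝ => 1 / r ^ p) 1 :=
        (continuousAt_const.div ((continuous_pow p).continuousAt) (by simp))
      have := hc.tendsto.mono_left (nhdsWithin_le_nhds (s := Set.Iio (1:ℝ)))
      simpa using this
    refine ge_of_tendsto h1 ?_
    have hmem : Set.Ioo (‖z‖) 1 ∈ nhdsWithin (1:ℝ) (Set.Iio 1) := by
      apply Ioo_mem_nhdsLT_of_mem
      constructor
      · exact hz
      · exact le_refl 1
    filter_upwards [hmem] with r hr
    exact key r hr.1 hr.2
  set A : ℝ := ‖g 0‖ with hAdef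
  have hA0 : 0 ≤ A := norm_nonneg _
  have hA1 : A ≤ 1 := hgle 0 (mem_ball_self one_pos)
  -- main bound on g
  have habs_bound : ∀ z ∈ ball (0:ℂ) 1,
      ‖g z‖ ≤ (‖z‖ + A) / (1 + A * ‖z‖) := by
    by_cases hstrict : ∀ w ∈ ball (0:ℂ) 1, ‖g w‖ < 1
    · -- Möbius transform argument
      intro z hz
      have hzlt : ‖z‖ < 1 := by rwa [mem_ball_zero_iff] at hz
      set a : ℂ := g 0 with hadef
      have haA : ‖a‖ = A := rfl
      have halt : A < 1 := hstrict 0 (mem_ball_self one_pos)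
      set h : ℂ → ℂ := fun w => (g w - a) / (1 - (starRingEnd ℂ) a * g w) with hhdef
      have hden : ∀ w ∈ ball (0:ℂ) 1, (1 : ℂ) - (starRingEnd ℂ) a * g w ≠ 0 := by
        intro w hw heq
        have h1 : (1:ℂ) = (starRingEnd ℂ) a * g w := sub_eq_zero.mp heq
        have h2 : (1:ℝ) = A * ‖g w‖ := by
          have := congrArg norm h1
          rwa [norm_one, norm_mul, Complex.norm_conj, haA] at this
        have h3 := hstrict w hw
        nlinarith
      have hhd : DifferentiableOn ℂ h (ball (0:ℂ) 1) := by
        apply DifferentiableOn.div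
        · exact hgdiff.sub (differentiableOn_const a)
        · exact (differentiableOn_const _).sub ((differentiableOn_const _).mul hgdiff)
        · exact hden
      have hh0 : h 0 = 0 := by
        have : h 0 = (g 0 - a) / (1 - (starRingEnd ℂ) a * g 0) := rfl
        rw [this, ← hadef, sub_self, zero_div]
      have hmapsh : Set.MapsTo h (ball (0:ℂ) 1) (ball (0:ℂ) 1) := by
        intro w hw
        rw [mem_ball_zero_iff]
        set G : ℝ := ‖g w‖ with hGdef
        have hG1 : G < 1 := hstrict w hw
        have hG0 : 0 ≤ G := norm_nonneg _
        have hnum : (‖g w - a‖) ^ 2 =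
            G ^ 2 + A ^ 2 - 2 * (g w * (starRingEnd ℂ) a).re := by
          rw [Complex.sq_norm, Complex.normSq_sub, ← Complex.sq_norm, ← Complex.sq_norm]
        have hdenom : (‖1 - (starRingEnd ℂ) a * g w‖) ^ 2 =
            1 + A ^ 2 * G ^ 2 - 2 * (g w * (starRingEnd ℂ) a).re := by
          rw [Complex.sq_norm, Complex.normSq_sub]
          have e1 : Complex.normSq 1 = 1 := by simp
          have e2 : Complex.normSq ((starRingEnd ℂ) a * g w) = A ^ 2 * G ^ 2 := by
            rw [Complex.normSq_mul, Complex.normSq_conj, ← Complex.sq_norm, ← Complex.sq_norm]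
          have e3 : ((1 : ℂ) * (starRingEnd ℂ) ((starRingEnd ℂ) a * g w)).re
              = (g w * (starRingEnd ℂ) a).re := by
            rw [one_mul, map_mul, Complex.conj_conj,
              show a * (starRingEnd ℂ) (g w) = (starRingEnd ℂ) (g w * (starRingEnd ℂ) a) by
                rw [map_mul, Complex.conj_conj]; ring,
              Complex.conj_re]
          rw [e1, e2, e3]
        have hlt : ‖g w - a‖ < ‖1 - (starRingEnd ℂ) a * g w‖ := by
          apply lt_of_pow_lt_pow_left₀ 2 (norm_nonneg _)
          rw [hnum, hdenom]
          nlinarith [mul_pos (by nlinarith : (0:ℝ) < 1 - A ^ 2)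
            (by nlinarith : (0:ℝ) < 1 - G ^ 2)]
        have hdpos : 0 < ‖1 - (starRingEnd ℂ) a * g w‖ :=
          lt_of_le_of_lt (norm_nonneg _) hlt
        have hw' : h w = (g w - a) / (1 - (starRingEnd ℂ) a * g w) := rfl
        rw [hw', norm_div, div_lt_one hdpos]
        exact hlt
      have habs_h : ‖h z‖ ≤ ‖z‖ :=
        Complex.norm_le_norm_of_mapsTo_ball_self hhd (hmapsh.mono_right ball_subset_closedBall) hh0 hzlt
      set H : ℝ := ‖h z‖ with hHdef
      have hH0 : 0 ≤ H := norm_nonneg _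
      have hH1 : H ≤ 1 := habs_h.trans hzlt.le
      have hid : g z * (1 + (starRingEnd ℂ) a * h z) = h z + a := by
        have hd := hden z hz
        have hz' : h z = (g z - a) / (1 - (starRingEnd ℂ) a * g z) := rfl
        rw [hz', div_eq_mul_inv]
        linear_combination (a - g z) * mul_inv_cancel₀ hd
      set D : ℝ := ‖1 + (starRingEnd ℂ) a * h z‖ with hDdef
      have hDpos : 0 < D := by
        have hle : (1:ℝ) - A * H ≤ D := by
          have htr := norm_add_le (1 + (starRingEnd ℂ) a * h z)
            (-((starRingEnd ℂ) a * h z))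
          simp only [add_neg_cancel_right] at htr
          rw [norm_one] at htr
          have : ‖-((starRingEnd ℂ) a * h z)‖ = A * H := by
            rw [norm_neg, norm_mul, Complex.norm_conj, haA]
          rw [this] at htr
          linarith
        nlinarith
      have e1 : ‖g z‖ * D = ‖h z + a‖ := by
        rw [hDdef, ← norm_mul, hid]
      have hkey := schwarz_aux_key_ineq a (h z) hA1 hH1
      rw [haA] at hkey
      have h1AH : 0 < 1 + A * H := by nlinarith
      have step1 : ‖g z‖ * (1 + A * H) ≤ H + A := by
        rw [← mul_le_mul_iff_of_pos_right hDpos]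
        calc ‖g z‖ * (1 + A * H) * D
            = (‖g z‖ * D) * (1 + A * H) := by ring
          _ = ‖h z + a‖ * (1 + A * H) := by rw [e1]
          _ ≤ (H + A) * D := hkey
      have step2 : ‖g z‖ ≤ (H + A) / (1 + A * H) := by
        rw [le_div_iff₀ h1AH]; exact step1
      exact step2.trans (schwarz_aux_mono A H (‖z‖) hA0 hA1 hH0 habs_h)
    · -- constant case by maximum modulus
      push_neg at hstrict
      obtain ⟨w0, hw0, hw0ge⟩ := hstrict
      have hw0eq : ‖g w0‖ = 1 := le_antisymm (hgle w0 hw0) hw0ge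
      have hmax : IsMaxOn (norm ∘ g) (ball (0:ℂ) 1) w0 := by
        intro x hx
        simp only [Function.comp_apply, Set.mem_setOf_eq, hw0eq]
        exact hgle x hx
      have hconst : Set.EqOn g (Function.const ℂ (g w0)) (ball (0:ℂ) 1) :=
        Complex.eqOn_of_isPreconnected_of_isMaxOn_norm (convex_ball _ _).isPreconnected
          isOpen_ball hgdiff hw0 hmax
      have hA1' : A = 1 := by
        rw [hAdef, hconst (mem_ball_self one_pos)]
        exact hw0eq
      intro z hz
      have hzlt : ‖z‖ < 1 := by rwa [mem_ball_zero_iff] at hz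
      rw [hconst hz, hA1']
      have : (‖z‖ + 1) / (1 + 1 * ‖z‖) = 1 := by
        rw [one_mul, div_eq_one_iff_eq (by positivity)]
        ring
      rw [this]
      simpa [Function.const_apply] using hw0eq.le
  -- conclusion
  have hAeq : A = ‖iteratedDeriv p f 0‖ / (p.factorial : ℝ) := by
    have h := hcoeff p
    have hcp : q.coeff p = iteratedDeriv p f 0 / (p.factorial : ℂ) := by
      rw [eq_div_iff (Nat.cast_ne_zero.mpr p.factorial_ne_zero : (p.factorial : ℂ) ≠ 0),
        mul_comm]
      exact h
    rw [hAdef, hg0, hcp, norm_div, Complex.norm_natCast]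
  intro z hz
  rw [← hAeq]
  have hZ0 : 0 ≤ ‖z‖ := norm_nonneg z
  calc ‖f z‖ = (‖z‖) ^ p * ‖g z‖ := by
        rw [hfz z, norm_mul, norm_pow]
    _ ≤ (‖z‖) ^ p * ((‖z‖ + A) / (1 + A * ‖z‖)) := by
        apply mul_le_mul_of_nonneg_left (habs_bound z hz) (pow_nonneg hZ0 p)
end

section
/- For every complex number ζ with |Re ζ| ≤ π/2 (and e^{iζ} ≠ −1), one has tan(|Re ζ|/2) ≤ |(e^{iζ} − 1)/(e^{iζ} + 1)|. -/
open Complex Real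

theorem tan_half_re_le_abs_cayley
    (ζ : ℂ) (hre : |ζ.re| ≤ π / 2) (hne : Complex.exp (Complex.I * ζ) ≠ -1) :
    Real.tan (|ζ.re| / 2) ≤
      ‖(Complex.exp (Complex.I * ζ) - 1) / (Complex.exp (Complex.I * ζ) + 1)‖ := by
  have hpi : (0:ℝ) < π := Real.pi_pos
  set x := ζ.re with hx
  set w := Complex.exp (Complex.I * ζ) with hwdef
  have hre' : (Complex.I * ζ).re = -ζ.im := by simp [Complex.mul_re]
  have him' : (Complex.I * ζ).im = x := by simp [Complex.mul_im, hx]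
  set r := Real.exp (-ζ.im) with hrdef
  have hr0 : 0 < r := Real.exp_pos _
  have habsw : ‖w‖ = r := by rw [hwdef, Complex.norm_exp, hre']
  set c := Real.cos x with hc
  have hwre : w.re = r * c := by rw [hwdef, Complex.exp_re, hre', him']
  have hnormw : w.re ^ 2 + w.im ^ 2 = r ^ 2 := by
    have h1 := Complex.sq_norm w
    rw [habsw, Complex.normSq_apply] at h1
    linear_combination -h1
  have hxle := abs_le.mp hre
  have hc0 : 0 ≤ c := Real.cos_nonneg_of_mem_Icc ⟨hxle.1, hxle.2⟩
  set t := |x| / 2 with ht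
  have ht0 : 0 ≤ t := by positivity
  have htlt : t < π / 2 := by
    have : |x| ≤ π / 2 := hre
    rw [ht]; linarith
  have hcost : 0 < Real.cos t := Real.cos_pos_of_mem_Ioo ⟨by linarith, htlt⟩
  have hsint : 0 ≤ Real.sin t := Real.sin_nonneg_of_nonneg_of_le_pi ht0 (by linarith)
  have htan0 : 0 ≤ Real.tan t := by
    rw [Real.tan_eq_sin_div_cos]; exact div_nonneg hsint hcost.le
  have hcos2 : Real.cos (2 * t) = c := by
    rw [ht, show 2 * (|x| / 2) = |x| by ring, Real.cos_abs]
  have hsin2 : Real.sin t ^ 2 = (1 - c) / 2 := by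
    have := Real.sin_sq_eq_half_sub t
    rw [hcos2] at this; linarith
  have hcossq : Real.cos t ^ 2 = (1 + c) / 2 := by
    have := Real.sin_sq_add_cos_sq t
    nlinarith [hsin2]
  have htansq : Real.tan t ^ 2 = (1 - c) / (1 + c) := by
    rw [Real.tan_eq_sin_div_cos, div_pow, hsin2, hcossq]
    field_simp
  -- squared RHS
  have hden_ne : w + 1 ≠ 0 := by
    intro h
    apply hne; linear_combination h
  have hnum : Complex.normSq (w - 1) = r ^ 2 - 2 * r * c + 1 := by
    rw [Complex.normSq_apply]
    simp only [Complex.sub_re, Complex.sub_im, Complex.one_re, Complex.one_im]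
    linear_combination hnormw - 2 * hwre
  have hden : Complex.normSq (w + 1) = r ^ 2 + 2 * r * c + 1 := by
    rw [Complex.normSq_apply]
    simp only [Complex.add_re, Complex.add_im, Complex.one_re, Complex.one_im]
    linear_combination hnormw + 2 * hwre
  have hdenpos : 0 < r ^ 2 + 2 * r * c + 1 := by
    rw [← hden]; exact Complex.normSq_pos.mpr hden_ne
  set A := ‖(w - 1) / (w + 1)‖ with hA
  have hA0 : 0 ≤ A := norm_nonneg _
  have hAsq : A ^ 2 = (r ^ 2 - 2 * r * c + 1) / (r ^ 2 + 2 * r * c + 1) := by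
    rw [hA, norm_div, div_pow, Complex.sq_norm, Complex.sq_norm, hnum, hden]
  have hkey : Real.tan t ^ 2 ≤ A ^ 2 := by
    rw [htansq, hAsq]
    rw [div_le_div_iff₀ (by linarith) hdenpos]
    nlinarith [mul_nonneg hc0 (sq_nonneg (r - 1))]
  exact (pow_le_pow_iff_left₀ htan0 hA0 two_ne_zero).mp hkey
end

section
/- Let w = h + conj(g) be a sense-preserving harmonic mapping of 𝔻 with w(𝔻) ⊆ 𝔻, where h, g are analytic on 𝔻 with g(0) = 0. Then for every n ≥ 1, |h^{(n)}(0)|/n! + |g^{(n)}(0)|/n! ≤ 4/π. -/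
open Complex Metric Real intervalIntegral ComplexConjugate

private lemma abs_cos_periodic : Function.Periodic (fun x : ℝ => |Real.cos x|) π := by
  intro x; simp [Real.cos_add_pi]

private lemma integral_abs_cos_zero_pi : ∫ x in (0:ℝ)..π, |Real.cos x| = 2 := by
  have h1 : ∫ x in (0:ℝ)..(π/2), |Real.cos x| = 1 := by
    rw [intervalIntegral.integral_congr (g := Real.cos) ?_, integral_cos]
    · simp
    · intro x hx
      rw [Set.uIcc_of_le (by positivity)] at hx
      exact abs_of_nonneg (Real.cos_nonneg_of_mem_Icc
        ⟨by linarith [hx.1, Real.pi_pos], hx.2⟩)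
  have h2 : ∫ x in (π/2:ℝ)..π, |Real.cos x| = 1 := by
    rw [intervalIntegral.integral_congr (g := fun x => -Real.cos x) ?_]
    · rw [intervalIntegral.integral_neg, integral_cos]; simp
    · intro x hx
      rw [Set.uIcc_of_le (by linarith [Real.pi_pos])] at hx
      exact abs_of_nonpos (Real.cos_nonpos_of_pi_div_two_le_of_le hx.1
        (by linarith [hx.2, Real.pi_pos]))
  have := intervalIntegral.integral_add_adjacent_intervals (μ := MeasureTheory.volume)
    (a := (0:ℝ)) (b := π/2) (c := π)
    ((Real.continuous_cos.abs).intervalIntegrable _ _)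
    ((Real.continuous_cos.abs).intervalIntegrable _ _)
  rw [h1, h2] at this; linarith

private lemma integral_abs_cos (n : ℕ) (hn : 1 ≤ n) (b : ℝ) :
    ∫ t in (0:ℝ)..(2 * π), |Real.cos (n * t + b)| = 4 := by
  have hn0 : (n:ℝ) ≠ 0 := Nat.cast_ne_zero.mpr (by omega)
  have hint : ∀ t₁ t₂ : ℝ, IntervalIntegrable (fun x => |Real.cos x|)
      MeasureTheory.volume t₁ t₂ := fun t₁ t₂ =>
    (Real.continuous_cos.abs).intervalIntegrable _ _
  rw [intervalIntegral.integral_comp_mul_add (fun x => |Real.cos x|) hn0 b]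
  have key : ∫ x in ((n:ℝ)*0 + b)..((n:ℝ)*(2*π) + b), |Real.cos x| = (2*n : ℤ) • 2 := by
    have h2 : (n:ℝ)*(2*π) + b = b + (2*n : ℤ) • π := by rw [zsmul_eq_mul]; push_cast; ring
    have h1 : (n:ℝ)*0 + b = b := by ring
    rw [h1, h2, abs_cos_periodic.intervalIntegral_add_zsmul_eq (2*n) b hint,
      abs_cos_periodic.intervalIntegral_add_eq b 0]
    rw [zero_add, integral_abs_cos_zero_pi]
  rw [key, zsmul_eq_mul]
  push_cast
  field_simp
  ring_nf
  simp [hn0]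

private lemma exp_neg_arg_mul (w : ℂ) :
    Complex.exp ((-(Complex.arg w) : ℝ) * I) * w = ((‖w‖ : ℝ) : ℂ) := by
  rw [Complex.ofReal_neg, neg_mul, Complex.exp_neg,
    inv_mul_eq_iff_eq_mul₀ (Complex.exp_ne_zero _), mul_comm]
  exact (Complex.norm_mul_exp_arg_mul_I w).symm

private lemma coeffA {F : ℂ → ℂ} (hF : DifferentiableOn ℂ F (ball (0:ℂ) 1))
    {r : ℝ} (hr0 : 0 < r) (hr1 : r < 1) (n : ℕ) :
    ∫ θ in (0:ℝ)..(2*π), (circleMap 0 r θ)⁻¹ ^ n * F (circleMap 0 r θ)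
      = 2 * π * (n.factorial : ℂ)⁻¹ * iteratedDeriv n F 0 := by
  set R : NNReal := ⟨r, hr0.le⟩ with hR
  have hRr : (R : ℝ) = r := rfl
  have hd : DifferentiableOn ℂ F (closedBall (0:ℂ) R) := by
    rw [hRr]; exact hF.mono (closedBall_subset_ball hr1)
  have hps := hd.hasFPowerSeriesOnBall (by exact_mod_cast hr0)
  have hfac := hps.factorial_smul (1:ℂ) n
  rw [← iteratedDeriv_eq_iteratedFDeriv] at hfac
  have happ := cauchyPowerSeries_apply F 0 (R:ℝ) n 1
  -- expand the circle integral
  have hcirc : (∮ z in C(0, (R:ℝ)), (1 / (z - 0)) ^ n • (z - 0)⁻¹ • F z)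
      = I * ∫ θ in (0:ℝ)..(2*π), (circleMap 0 r θ)⁻¹ ^ n * F (circleMap 0 r θ) := by
    rw [circleIntegral, ← intervalIntegral.integral_const_mul]
    rw [hRr]
    refine intervalIntegral.integral_congr fun θ _ => ?_
    have hz : circleMap 0 r θ ≠ 0 := circleMap_ne_center hr0.ne'
    rw [deriv_circleMap]
    simp only [smul_eq_mul, sub_zero, one_div]
    calc circleMap 0 r θ * I * ((circleMap 0 r θ)⁻¹ ^ n * ((circleMap 0 r θ)⁻¹ * F (circleMap 0 r θ)))
        = (circleMap 0 r θ * (circleMap 0 r θ)⁻¹) * (I * ((circleMap 0 r θ)⁻¹ ^ n * F (circleMap 0 r θ))) := by ring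
      _ = I * ((circleMap 0 r θ)⁻¹ ^ n * F (circleMap 0 r θ)) := by rw [mul_inv_cancel₀ hz, one_mul]
  rw [happ, hcirc] at hfac
  have hfac' : (n.factorial : ℂ) * ((2 * ↑π * I)⁻¹ *
      (I * ∫ θ in (0:ℝ)..(2*π), (circleMap 0 r θ)⁻¹ ^ n * F (circleMap 0 r θ)))
        = iteratedDeriv n F 0 := by
    rw [← hfac]; simp [smul_eq_mul]
  have hpi : (π:ℂ) ≠ 0 := by exact_mod_cast Real.pi_ne_zero
  have hfacne : (n.factorial : ℂ) ≠ 0 := by exact_mod_cast n.factorial_ne_zero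
  rw [← hfac']
  field_simp

private lemma coeffB {F : ℂ → ℂ} (hF : DifferentiableOn ℂ F (ball (0:ℂ) 1))
    {r : ℝ} (hr0 : 0 < r) (hr1 : r < 1) {n : ℕ} (hn : 1 ≤ n) :
    ∫ θ in (0:ℝ)..(2*π), (circleMap 0 r θ) ^ n * F (circleMap 0 r θ) = 0 := by
  have hzero : (∮ z in C(0, r), z ^ (n-1) * F z) = 0 := by
    refine circleIntegral_eq_zero_of_differentiable_on_off_countable hr0.le
      Set.countable_empty ?_ ?_
    · exact ((continuous_pow _).continuousOn).mul
        (hF.continuousOn.mono (closedBall_subset_ball hr1))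
    · intro z hz
      have hzb : z ∈ ball (0:ℂ) 1 := ball_subset_ball hr1.le hz.1
      exact (differentiableAt_pow _).mul (hF.differentiableAt (isOpen_ball.mem_nhds hzb))
  rw [circleIntegral] at hzero
  have : (∫ θ in (0:ℝ)..(2*π), deriv (circleMap 0 r) θ •
      ((circleMap 0 r θ) ^ (n-1) * F (circleMap 0 r θ)))
      = I * ∫ θ in (0:ℝ)..(2*π), (circleMap 0 r θ) ^ n * F (circleMap 0 r θ) := by
    rw [← intervalIntegral.integral_const_mul]
    refine intervalIntegral.integral_congr fun θ _ => ?_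
    rw [deriv_circleMap]
    have hpow : circleMap 0 r θ * (circleMap 0 r θ) ^ (n-1) = (circleMap 0 r θ) ^ n := by
      rw [← pow_succ']
      congr 1
      omega
    simp only [smul_eq_mul]
    calc circleMap 0 r θ * I * ((circleMap 0 r θ) ^ (n-1) * F (circleMap 0 r θ))
        = I * ((circleMap 0 r θ * (circleMap 0 r θ) ^ (n-1)) * F (circleMap 0 r θ)) := by ring
      _ = I * ((circleMap 0 r θ) ^ n * F (circleMap 0 r θ)) := by rw [hpow]
  rw [this] at hzero
  exact (mul_eq_zero.mp hzero).resolve_left Complex.I_ne_zero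

private lemma coeff_bound {F : ℂ → ℂ} (hF : DifferentiableOn ℂ F (ball (0:ℂ) 1))
    (hre : ∀ z ∈ ball (0:ℂ) 1, |(F z).re| ≤ 1)
    {n : ℕ} (hn : 1 ≤ n) {c : ℂ}
    (hc : ∀ r : ℝ, 0 < r → r < 1 →
      ∫ θ in (0:ℝ)..(2*π), (circleMap 0 r θ)⁻¹ ^ n * F (circleMap 0 r θ) = 2 * π * c) :
    ‖c‖ ≤ 4 / π := by
  have key : ∀ r : ℝ, 0 < r → r < 1 → π * ‖c‖ * r ^ n ≤ 4 := by
    intro r hr0 hr1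
    have hzball : ∀ θ : ℝ, circleMap 0 r θ ∈ ball (0:ℂ) 1 := fun θ => by
      rw [mem_ball_zero_iff, norm_circleMap_zero, abs_of_pos hr0]
      exact hr1
    have hzne : ∀ θ : ℝ, circleMap 0 r θ ≠ 0 := fun _ => circleMap_ne_center hr0.ne'
    have hrC : (r : ℂ) ≠ 0 := by exact_mod_cast hr0.ne'
    have hFc : Continuous fun θ : ℝ => F (circleMap 0 r θ) := by
      rw [← continuousOn_univ]
      exact hF.continuousOn.comp (continuous_circleMap 0 r).continuousOn
        fun θ _ => hzball θ
    have hzc : Continuous fun θ : ℝ => (circleMap 0 r θ)⁻¹ ^ n :=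
      ((continuous_circleMap 0 r).inv₀ hzne).pow n
    -- the conjugate part integrates to zero
    have hB := coeffB hF hr0 hr1 hn
    have hconjzero : ∫ θ in (0:ℝ)..(2*π),
        (circleMap 0 r θ)⁻¹ ^ n * conj (F (circleMap 0 r θ)) = 0 := by
      have hint : IntervalIntegrable (fun θ : ℝ => (circleMap 0 r θ) ^ n * F (circleMap 0 r θ))
          MeasureTheory.volume 0 (2*π) :=
        (((continuous_circleMap 0 r).pow n).mul hFc).intervalIntegrable _ _
      have hcomm := (Complex.conjCLE.toContinuousLinearMap).intervalIntegral_comp_comm hint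
      simp only [ContinuousLinearEquiv.coe_coe, Complex.conjCLE_apply] at hcomm
      have hpt : ∀ θ ∈ Set.uIcc (0:ℝ) (2*π), (circleMap 0 r θ)⁻¹ ^ n * conj (F (circleMap 0 r θ))
          = ((r:ℂ) ^ (2*n))⁻¹ * conj ((circleMap 0 r θ) ^ n * F (circleMap 0 r θ)) := by
        intro θ _
        have hm : circleMap 0 r θ * conj (circleMap 0 r θ) = ((r:ℝ)^2 : ℝ) := by
          rw [Complex.mul_conj]
          norm_cast
          rw [Complex.normSq_eq_norm_sq, norm_circleMap_zero, abs_of_pos hr0]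
        have hcz : conj (circleMap 0 r θ) = (r:ℂ)^2 * (circleMap 0 r θ)⁻¹ := by
          rw [eq_comm, mul_inv_eq_iff_eq_mul₀ (hzne θ)]
          push_cast at hm ⊢
          linear_combination -hm
        rw [map_mul, map_pow, hcz, mul_pow]
        have h1 : ((r:ℂ) ^ (2*n))⁻¹ * ((r:ℂ)^2)^n = 1 := by
          rw [← pow_mul, mul_comm 2 n, inv_mul_cancel₀ (pow_ne_zero _ hrC)]
        linear_combination (-((circleMap 0 r θ)⁻¹^n * conj (F (circleMap 0 r θ)))) * h1
      rw [intervalIntegral.integral_congr hpt, intervalIntegral.integral_const_mul,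
        hcomm, hB, map_zero, mul_zero]
    have hA := hc r hr0 hr1
    -- integral against the real part
    have hint1 : IntervalIntegrable
        (fun θ : ℝ => (circleMap 0 r θ)⁻¹ ^ n * F (circleMap 0 r θ))
        MeasureTheory.volume 0 (2*π) := (hzc.mul hFc).intervalIntegrable _ _
    have hint2 : IntervalIntegrable
        (fun θ : ℝ => (circleMap 0 r θ)⁻¹ ^ n * conj (F (circleMap 0 r θ)))
        MeasureTheory.volume 0 (2*π) :=
      (hzc.mul (Complex.continuous_conj.comp hFc)).intervalIntegrable _ _
    have hu : ∫ θ in (0:ℝ)..(2*π),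
        (circleMap 0 r θ)⁻¹ ^ n * (((F (circleMap 0 r θ)).re : ℝ) : ℂ) = π * c := by
      have hsum := intervalIntegral.integral_add hint1 hint2
      rw [hA, hconjzero, add_zero] at hsum
      have hpt : ∀ θ ∈ Set.uIcc (0:ℝ) (2*π),
          (circleMap 0 r θ)⁻¹ ^ n * F (circleMap 0 r θ)
            + (circleMap 0 r θ)⁻¹ ^ n * conj (F (circleMap 0 r θ))
          = (2:ℂ) * ((circleMap 0 r θ)⁻¹ ^ n * (((F (circleMap 0 r θ)).re : ℝ) : ℂ)) := by
        intro θ _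
        rw [← mul_add, Complex.add_conj]
        push_cast
        ring
      rw [intervalIntegral.integral_congr hpt, intervalIntegral.integral_const_mul] at hsum
      field_simp at hsum ⊢
      linear_combination hsum
    -- replace circleMap by unit circle exponentials
    set v : ℂ := ∫ θ in (0:ℝ)..(2*π),
      (Complex.exp (θ * I))⁻¹ ^ n * (((F (circleMap 0 r θ)).re : ℝ) : ℂ) with hvdef
    have hv : v = (r:ℂ) ^ n * (π * c) := by
      rw [hvdef, ← hu, ← intervalIntegral.integral_const_mul]
      refine intervalIntegral.integral_congr fun θ _ => ?_
      have hcm : (circleMap 0 r θ)⁻¹ ^ n = (r:ℂ)⁻¹^n * (Complex.exp ((θ:ℂ) * I))⁻¹^n := by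
        rw [circleMap_zero, mul_inv, mul_pow]
      rw [hcm]
      have h1 : (r:ℂ)^n * ((r:ℂ)⁻¹)^n = 1 := by
        rw [← mul_pow, mul_inv_cancel₀ hrC, one_pow]
      linear_combination (-((Complex.exp ((θ:ℂ)*I))⁻¹^n * (((F (circleMap 0 r θ)).re : ℝ):ℂ))) * h1
    have habsv : ‖v‖ ≤ 4 := by
      have hχ : True := trivial
      set χ : ℝ := Complex.arg v with hχdef
      have hrot : ((‖v‖ : ℝ) : ℂ) = Complex.exp ((-χ : ℝ) * I) * v := by
        conv_rhs => rw [← Complex.norm_mul_exp_arg_mul_I v]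
        rw [← mul_assoc, mul_comm (Complex.exp _), mul_assoc, ← Complex.exp_add,
          show ((-χ : ℝ) : ℂ) * I + (Complex.arg v : ℂ) * I = 0 by
            rw [hχdef]; push_cast; ring,
          Complex.exp_zero, mul_one]
      have hec : Continuous fun θ : ℝ => (Complex.exp (θ * I))⁻¹ ^ n :=
        (((Complex.continuous_ofReal.mul continuous_const).cexp).inv₀
          fun _ => Complex.exp_ne_zero _).pow n
      have hintg : IntervalIntegrable
          (fun θ : ℝ => Complex.exp ((-χ : ℝ) * I) *
            ((Complex.exp (θ * I))⁻¹ ^ n * (((F (circleMap 0 r θ)).re : ℝ) : ℂ)))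
          MeasureTheory.volume 0 (2*π) :=
        (continuous_const.mul (hec.mul
          (Complex.continuous_ofReal.comp (Complex.continuous_re.comp hFc)))).intervalIntegrable _ _
      have hre_eq : ‖v‖ = ∫ θ in (0:ℝ)..(2*π),
          (F (circleMap 0 r θ)).re * Real.cos (n * θ + χ) := by
        have hcomm := Complex.reCLM.intervalIntegral_comp_comm hintg
        rw [intervalIntegral.integral_const_mul, ← hvdef, ← hrot] at hcomm
        simp only [Complex.reCLM_apply, Complex.ofReal_re] at hcomm
        rw [← hcomm]
        refine intervalIntegral.integral_congr fun θ _ => ?_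
        have hexp : Complex.exp ((-χ : ℝ) * I) * (Complex.exp (θ * I))⁻¹ ^ n
            = Complex.exp (((-(χ + n * θ) : ℝ)) * I) := by
          rw [← Complex.exp_neg, ← Complex.exp_nat_mul, ← Complex.exp_add]
          congr 1
          push_cast
          ring
        rw [← mul_assoc, hexp]
        simp only [Complex.mul_re, Complex.ofReal_re, Complex.ofReal_im, mul_zero, sub_zero]
        rw [Complex.exp_ofReal_mul_I_re]
        rw [show -(χ + (n:ℝ) * θ) = -((n:ℝ) * θ + χ) by ring, Real.cos_neg]
        ring
      rw [hre_eq]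
      calc ∫ θ in (0:ℝ)..(2*π), (F (circleMap 0 r θ)).re * Real.cos (n * θ + χ)
          ≤ ∫ θ in (0:ℝ)..(2*π), |Real.cos ((n:ℝ) * θ + χ)| := by
            refine intervalIntegral.integral_mono_on (by positivity) ?_ ?_ ?_
            · exact ((Complex.continuous_re.comp hFc).mul
                ((Real.continuous_cos.comp
                  ((continuous_const.mul continuous_id).add continuous_const)))).intervalIntegrable _ _
            · exact ((Real.continuous_cos.comp
                ((continuous_const.mul continuous_id).add continuous_const)).abs).intervalIntegrable _ _
            · intro θ _
              calc (F (circleMap 0 r θ)).re * Real.cos ((n:ℝ) * θ + χ)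
                  ≤ |(F (circleMap 0 r θ)).re * Real.cos ((n:ℝ) * θ + χ)| := le_abs_self _
                _ = |(F (circleMap 0 r θ)).re| * |Real.cos ((n:ℝ) * θ + χ)| := abs_mul _ _
                _ ≤ 1 * |Real.cos ((n:ℝ) * θ + χ)| := by
                    exact mul_le_mul_of_nonneg_right (hre _ (hzball θ)) (abs_nonneg _)
                _ = |Real.cos ((n:ℝ) * θ + χ)| := one_mul _
        _ = 4 := integral_abs_cos n hn χ
    have hfin : ‖v‖ = π * ‖c‖ * r ^ n := by
      rw [hv]
      simp only [norm_mul, norm_pow, Complex.norm_real, Real.norm_eq_abs, abs_of_pos hr0,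
        abs_of_pos Real.pi_pos]
      ring
    rw [hfin] at habsv
    exact habsv
  have hle : π * ‖c‖ ≤ 4 := by
    have hlim : Filter.Tendsto (fun r : ℝ => π * ‖c‖ * r ^ n)
        (nhdsWithin 1 (Set.Iio 1)) (nhds (π * ‖c‖)) := by
      have hcont : Continuous fun r : ℝ => π * ‖c‖ * r ^ n :=
        continuous_const.mul (continuous_pow n)
      have := (hcont.tendsto (1:ℝ)).mono_left (nhdsWithin_le_nhds (s := Set.Iio (1:ℝ)))
      simpa using this
    refine le_of_tendsto hlim ?_
    filter_upwards [Ioo_mem_nhdsLT_of_mem (Set.mem_Ioc.mpr ⟨one_pos, le_refl 1⟩)] with r hr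
    exact key r hr.1 hr.2
  rw [le_div_iff₀ Real.pi_pos]
  linarith

theorem harmonic_coeff_bound
    (h g : ℂ → ℂ)
    (hh : DifferentiableOn ℂ h (ball (0:ℂ) 1))
    (hg : DifferentiableOn ℂ g (ball (0:ℂ) 1))
    (hg0 : g 0 = 0)
    (hsp : ∀ z ∈ ball (0:ℂ) 1, ‖deriv g z‖ < ‖deriv h z‖)
    (hmaps : ∀ z ∈ ball (0:ℂ) 1, ‖h z + (starRingEnd ℂ) (g z)‖ < 1) :
    ∀ n : ℕ, 1 ≤ n →
      ‖iteratedDeriv n h 0‖ / (n.factorial : ℝ) +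
        ‖iteratedDeriv n g 0‖ / (n.factorial : ℝ) ≤ 4 / π := by
  intro n hn
  set a : ℂ := iteratedDeriv n h 0 with ha
  set b : ℂ := iteratedDeriv n g 0 with hb
  set t : ℂ := a * conj b with ht
  set lam : ℂ := Complex.exp ((-(Complex.arg t / 2) : ℝ) * I) with hlam
  have hlam_abs : ‖lam‖ = 1 := by
    rw [hlam, Complex.norm_exp]
    simp
  have hlam2 : lam ^ 2 * t = ((‖t‖ : ℝ) : ℂ) := by
    have hsq : lam ^ 2 = Complex.exp ((-(Complex.arg t) : ℝ) * I) := by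
      rw [hlam, ← Complex.exp_nat_mul]
      congr 1
      push_cast
      ring
    rw [hsq]
    exact exp_neg_arg_mul t
  set F : ℂ → ℂ := fun z => lam * h z + conj lam * g z with hF
  have hFd : DifferentiableOn ℂ F (ball (0:ℂ) 1) :=
    ((differentiableOn_const _).mul hh).add ((differentiableOn_const _).mul hg)
  have hre : ∀ z ∈ ball (0:ℂ) 1, |(F z).re| ≤ 1 := by
    intro z hz
    have h1 : (F z).re = (lam * (h z + conj (g z))).re := by
      have h2 : conj (lam * conj (g z)) = conj lam * g z := by
        rw [map_mul, Complex.conj_conj]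
      rw [hF]
      simp only [mul_add, Complex.add_re]
      rw [← h2, Complex.conj_re]
    rw [h1]
    refine le_trans (Complex.abs_re_le_norm _) ?_
    rw [norm_mul, hlam_abs, one_mul]
    exact (hmaps z hz).le
  set c : ℂ := (n.factorial : ℂ)⁻¹ * (lam * a + conj lam * b) with hcdef
  have hc : ∀ r : ℝ, 0 < r → r < 1 →
      ∫ θ in (0:ℝ)..(2*π), (circleMap 0 r θ)⁻¹ ^ n * F (circleMap 0 r θ) = 2 * π * c := by
    intro r hr0 hr1
    have hzball : ∀ θ : ℝ, circleMap 0 r θ ∈ ball (0:ℂ) 1 := fun θ => by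
      rw [mem_ball_zero_iff, norm_circleMap_zero, abs_of_pos hr0]
      exact hr1
    have hzne : ∀ θ : ℝ, circleMap 0 r θ ≠ 0 := fun _ => circleMap_ne_center hr0.ne'
    have hzc : Continuous fun θ : ℝ => (circleMap 0 r θ)⁻¹ ^ n :=
      ((continuous_circleMap 0 r).inv₀ hzne).pow n
    have hhc : Continuous fun θ : ℝ => h (circleMap 0 r θ) := by
      rw [← continuousOn_univ]
      exact hh.continuousOn.comp (continuous_circleMap 0 r).continuousOn fun θ _ => hzball θ
    have hgc : Continuous fun θ : ℝ => g (circleMap 0 r θ) := by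
      rw [← continuousOn_univ]
      exact hg.continuousOn.comp (continuous_circleMap 0 r).continuousOn fun θ _ => hzball θ
    have hAh := coeffA hh hr0 hr1 n
    have hAg := coeffA hg hr0 hr1 n
    have hsplit : ∀ θ ∈ Set.uIcc (0:ℝ) (2*π),
        (circleMap 0 r θ)⁻¹ ^ n * F (circleMap 0 r θ)
          = lam * ((circleMap 0 r θ)⁻¹ ^ n * h (circleMap 0 r θ))
            + conj lam * ((circleMap 0 r θ)⁻¹ ^ n * g (circleMap 0 r θ)) := by
      intro θ _
      rw [hF]
      ring
    rw [intervalIntegral.integral_congr hsplit,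
      intervalIntegral.integral_add
        (f := fun θ => lam * ((circleMap 0 r θ)⁻¹ ^ n * h (circleMap 0 r θ)))
        (g := fun θ => conj lam * ((circleMap 0 r θ)⁻¹ ^ n * g (circleMap 0 r θ)))
        ((continuous_const.mul (hzc.mul hhc)).intervalIntegrable _ _)
        ((continuous_const.mul (hzc.mul hgc)).intervalIntegrable _ _),
      intervalIntegral.integral_const_mul, intervalIntegral.integral_const_mul, hAh, hAg,
      hcdef, ← ha, ← hb]
    ring
  have hcle : ‖c‖ ≤ 4 / π := coeff_bound hFd hre hn hc
  have habs : ‖lam * a + conj lam * b‖ = ‖a‖ + ‖b‖ := by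
    have hsq : (‖lam * a + conj lam * b‖)^2
        = (‖a‖ + ‖b‖)^2 := by
      rw [Complex.sq_norm, Complex.normSq_add]
      have h1 : lam * a * conj (conj lam * b) = lam ^ 2 * t := by
        rw [map_mul, Complex.conj_conj, ht]
        ring
      have h2 : Complex.normSq (lam * a) = ‖a‖ ^ 2 := by
        rw [Complex.normSq_eq_norm_sq, norm_mul, hlam_abs, one_mul]
      have h3 : Complex.normSq (conj lam * b) = ‖b‖ ^ 2 := by
        rw [Complex.normSq_eq_norm_sq, norm_mul, Complex.norm_conj, hlam_abs, one_mul]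
      have h4 : ‖t‖ = ‖a‖ * ‖b‖ := by
        rw [ht, norm_mul, Complex.norm_conj]
      rw [h1, h2, h3, hlam2, Complex.ofReal_re, h4]
      ring
    have h5 : (0:ℝ) ≤ ‖lam * a + conj lam * b‖ := norm_nonneg _
    have h6 : (0:ℝ) ≤ ‖a‖ + ‖b‖ := by positivity
    nlinarith [hsq, h5, h6]
  have hcabs : ‖c‖
      = (‖a‖ + ‖b‖) / (n.factorial : ℝ) := by
    rw [hcdef, norm_mul, habs, norm_inv, Complex.norm_natCast]
    rw [div_eq_inv_mul]
  rw [← add_div, ← hcabs]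
  exact hcle
end

section
/- Let w = h + conj(g) be a sense-preserving harmonic mapping of 𝔻 with w(𝔻) ⊆ 𝔻, where h and g both have zeros of order at least p ≥ 1 at 0 (with w having a zero of order exactly p at 0). Then for every z ∈ 𝔻, |w(z)| ≤ (4/π) arctan[ |z|^p · (|z| + (π/4)(|a_p| + |b_p|)) / (1 + (π/4)(|a_p| + |b_p|)|z|) ], where a_p = h^{(p)}(0)/p! and b_p = g^{(p)}(0)/p!. -/
open Complex Metric Real

open Filter Topology in
private lemma my_bridge {f : ℂ → ℂ} {q : FormalMultilinearSeries ℂ ℂ ℂ}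
    (hq : HasFPowerSeriesAt f q 0) (n : ℕ) :
    iteratedDeriv n f 0 = (n.factorial : ℂ) * q.coeff n := by
  obtain ⟨r, hr⟩ := hq
  have h1 := hr.factorial_smul (1 : ℂ) n
  rw [iteratedDeriv_eq_iteratedFDeriv, ← h1, nsmul_eq_mul]
  rfl

open Filter Topology in
private lemma my_iter_dslope (f : ℂ → ℂ) (hf : AnalyticAt ℂ f 0) :
    ∀ (p : ℕ) (L : ℂ), Tendsto (fun z => f z / z ^ p) (𝓝[≠] (0:ℂ)) (𝓝 L) →
      AnalyticAt ℂ ((Function.swap dslope 0)^[p] f) 0 ∧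
      ((Function.swap dslope 0)^[p] f) 0 = L ∧
      ∀ z : ℂ, z ≠ 0 → ((Function.swap dslope 0)^[p] f) z = f z / z ^ p := by
  intro p
  induction p with
  | zero =>
    intro L hlim
    simp only [Function.iterate_zero, id_eq]
    have h1 : Tendsto f (𝓝[≠] (0:ℂ)) (𝓝 (f 0)) :=
      (hf.continuousAt.tendsto).mono_left nhdsWithin_le_nhds
    have h2 : Tendsto f (𝓝[≠] (0:ℂ)) (𝓝 L) := by
      have : (fun z : ℂ => f z / z ^ 0) = f := by funext z; simp
      rwa [this] at hlim
    exact ⟨hf, tendsto_nhds_unique h1 h2, fun z _ => by simp⟩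
  | succ p ih =>
    intro L hlim
    have hlim' : Tendsto (fun z => f z / z ^ p) (𝓝[≠] (0:ℂ)) (𝓝 0) := by
      have hev : (fun z : ℂ => f z / z ^ (p+1) * z) =ᶠ[𝓝[≠] (0:ℂ)]
          (fun z : ℂ => f z / z ^ p) := by
        filter_upwards [self_mem_nhdsWithin] with z hz
        have hz' : (z:ℂ) ≠ 0 := hz
        field_simp [pow_succ]
        ring
      have h2 : Tendsto (fun z : ℂ => f z / z ^ (p+1) * z) (𝓝[≠] (0:ℂ)) (𝓝 (L * 0)) :=
        hlim.mul (tendsto_id.mono_left nhdsWithin_le_nhds)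
      rw [mul_zero] at h2
      exact h2.congr' hev
    obtain ⟨ha, h0, heq⟩ := ih 0 hlim'
    set φ := (Function.swap dslope 0)^[p] f with hφ
    have hiter : (Function.swap dslope 0)^[p+1] f = dslope φ 0 := by
      rw [Function.iterate_succ_apply']
    obtain ⟨q, hq⟩ := ha
    have haφ : AnalyticAt ℂ (dslope φ 0) 0 :=
      (hq.has_fpower_series_dslope_fslope).analyticAt
    have heq' : ∀ z : ℂ, z ≠ 0 → dslope φ 0 z = f z / z ^ (p+1) := by
      intro z hz
      rw [dslope_of_ne _ hz, slope_def_field, heq z hz, h0]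
      rw [sub_zero, sub_zero, div_div]
      all_goals rw [← pow_succ]
    have hval : dslope φ 0 0 = L := by
      have hc : Tendsto (dslope φ 0) (𝓝[≠] (0:ℂ)) (𝓝 (dslope φ 0 0)) :=
        (haφ.continuousAt.tendsto).mono_left nhdsWithin_le_nhds
      have h2 : Tendsto (dslope φ 0) (𝓝[≠] (0:ℂ)) (𝓝 L) := by
        refine hlim.congr' ?_
        filter_upwards [self_mem_nhdsWithin] with z hz
        exact (heq' z hz).symm
      exact tendsto_nhds_unique hc h2
    rw [hiter]
    exact ⟨haφ, hval, heq'⟩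

open Filter Topology in
private lemma my_vanish_limit :
    ∀ (p : ℕ) (f : ℂ → ℂ), AnalyticAt ℂ f 0 → (∀ k < p, iteratedDeriv k f 0 = 0) →
      Tendsto (fun z => f z / z ^ p) (𝓝[≠] (0:ℂ))
        (𝓝 ((p.factorial : ℂ)⁻¹ * iteratedDeriv p f 0)) := by
  intro p
  induction p with
  | zero =>
    intro f hf _
    have : (fun z : ℂ => f z / z ^ 0) = f := by funext z; simp
    rw [this]
    simp only [Nat.factorial_zero, Nat.cast_one, inv_one, one_mul, iteratedDeriv_zero]
    exact (hf.continuousAt.tendsto).mono_left nhdsWithin_le_nhds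
  | succ p ih =>
    intro f hf hv
    obtain ⟨q, hq⟩ := hf
    have hf0 : f 0 = 0 := by
      have := hv 0 (Nat.succ_pos p)
      simpa [iteratedDeriv_zero] using this
    set f₁ := dslope f 0 with hf₁
    have hq₁ : HasFPowerSeriesAt f₁ q.fslope 0 := hq.has_fpower_series_dslope_fslope
    have ha₁ : AnalyticAt ℂ f₁ 0 := hq₁.analyticAt
    have hcoeff : ∀ k, iteratedDeriv k f 0 = (k.factorial : ℂ) * q.coeff k :=
      fun k => my_bridge hq k
    have hder : ∀ k, iteratedDeriv k f₁ 0 = (k.factorial : ℂ) * q.coeff (k+1) := by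
      intro k
      rw [my_bridge hq₁ k, FormalMultilinearSeries.coeff_fslope]
    have hcoeffzero : ∀ k < p + 1, q.coeff k = 0 := by
      intro k hk
      have h2 := hv k hk
      rw [hcoeff k] at h2
      have hne : ((k.factorial : ℂ)) ≠ 0 := by
        exact_mod_cast Nat.cast_ne_zero.mpr k.factorial_ne_zero
      exact (mul_eq_zero.1 h2).resolve_left hne
    have hv₁ : ∀ k < p, iteratedDeriv k f₁ 0 = 0 := by
      intro k hk
      rw [hder k, hcoeffzero (k+1) (by omega), mul_zero]
    have hlim₁ := ih f₁ ha₁ hv₁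
    have hvals : ((p.factorial : ℂ))⁻¹ * iteratedDeriv p f₁ 0
        = ((p+1).factorial : ℂ)⁻¹ * iteratedDeriv (p+1) f 0 := by
      rw [hder p, hcoeff (p+1)]
      have h1 : ((p.factorial : ℂ)) ≠ 0 := by
        exact_mod_cast Nat.cast_ne_zero.mpr p.factorial_ne_zero
      have h2 : (((p+1).factorial : ℂ)) ≠ 0 := by
        exact_mod_cast Nat.cast_ne_zero.mpr (p+1).factorial_ne_zero
      field_simp
    rw [← hvals]
    refine hlim₁.congr' ?_
    filter_upwards [self_mem_nhdsWithin] with z hz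
    have hz' : (z:ℂ) ≠ 0 := hz
    rw [hf₁, dslope_of_ne _ hz', slope_def_field, hf0]
    rw [sub_zero, sub_zero, div_div]
    all_goals rw [← pow_succ']

open Filter Topology in
private lemma my_maxmod (f : ℂ → ℂ) (hf : DifferentiableOn ℂ f (ball (0:ℂ) 1)) (q : ℕ)
    (hb : ∀ ζ ∈ ball (0:ℂ) 1, ‖f ζ‖ * (‖ζ‖) ^ q ≤ 1) :
    ∀ z ∈ ball (0:ℂ) 1, ‖f z‖ ≤ 1 := by
  intro z hz
  have hz1 : ‖z‖ < 1 := by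
    rwa [mem_ball_zero_iff] at hz
  have core : ∀ r : ℝ, ‖z‖ < r → r < 1 → ‖f z‖ ≤ (r ^ q)⁻¹ := by
    intro r h1 h2
    have hr0 : (0:ℝ) < r := lt_of_le_of_lt (norm_nonneg z) h1
    have hsub : closedBall (0:ℂ) r ⊆ ball (0:ℂ) 1 := closedBall_subset_ball h2
    have hd : DiffContOnCl ℂ f (ball (0:ℂ) r) := by
      refine ⟨hf.mono (ball_subset_ball h2.le), ?_⟩
      refine (hf.continuousOn).mono ?_
      rw [closure_ball (0:ℂ) hr0.ne']
      exact hsub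
    have hfr : ∀ ζ ∈ frontier (ball (0:ℂ) r), ‖f ζ‖ ≤ (r ^ q)⁻¹ := by
      intro ζ hζ
      rw [frontier_ball (0:ℂ) hr0.ne'] at hζ
      have hζr : ‖ζ‖ = r := by
        rw [mem_sphere_zero_iff_norm] at hζ
        exact hζ
      have hζb : ζ ∈ ball (0:ℂ) 1 := by
        rw [mem_ball_zero_iff, hζr]; exact h2
      have h3 := hb ζ hζb
      rw [hζr] at h3
      rw [← one_div, le_div_iff₀ (by positivity)]
      linarith
    have hzc : z ∈ closure (ball (0:ℂ) r) := by
      apply subset_closure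
      rw [mem_ball_zero_iff]; exact h1
    have := norm_le_of_forall_mem_frontier_norm_le isBounded_ball hd hfr hzc
    exact this
  have T : Tendsto (fun r : ℝ => (r ^ q)⁻¹) (𝓝[<] (1:ℝ)) (𝓝 1) := by
    have hc : ContinuousAt (fun r : ℝ => (r ^ q)⁻¹) 1 :=
      ((continuous_pow q).continuousAt).inv₀ (by norm_num)
    have := hc.tendsto.mono_left (nhdsWithin_le_nhds (s := Set.Iio (1:ℝ)))
    simpa using this
  refine ge_of_tendsto T ?_
  filter_upwards [Ioo_mem_nhdsLT hz1] with r hr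
  exact core r hr.1 hr.2

private lemma my_mobius_le_one {u a : ℂ} (hu : ‖u‖ ≤ 1) (ha : ‖a‖ < 1) :
    ‖(u - a) / (1 - (starRingEnd ℂ) a * u)‖ ≤ 1 := by
  set s := ‖u‖ with hs
  set t := ‖a‖ with ht
  have hs0 : 0 ≤ s := norm_nonneg u
  have ht0 : 0 ≤ t := norm_nonneg a
  have hd : (starRingEnd ℂ) a * u = (starRingEnd ℂ) a * u := rfl
  set d := ((starRingEnd ℂ) a * u).re with hdd
  set ee := ((starRingEnd ℂ) a * u).im with hee
  have hsq : d^2 + ee^2 = t^2 * s^2 := by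
    have h1 : Complex.normSq ((starRingEnd ℂ) a * u) = d^2 + ee^2 := by
      rw [Complex.normSq_apply]; ring
    have h2 : Complex.normSq ((starRingEnd ℂ) a * u) = (t * s)^2 := by
      rw [← Complex.sq_norm, norm_mul, Complex.norm_conj]
    rw [h1] at h2; rw [h2]; ring
  have hnum : ‖u - a‖ ^ 2 = s^2 + t^2 - 2*d := by
    rw [Complex.sq_norm, Complex.normSq_apply]
    have h3 : s^2 = u.re^2 + u.im^2 := by
      rw [hs, Complex.sq_norm, Complex.normSq_apply]; ring
    have h4 : t^2 = a.re^2 + a.im^2 := by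
      rw [ht, Complex.sq_norm, Complex.normSq_apply]; ring
    have h5 : d = a.re * u.re + a.im * u.im := by
      rw [hdd, Complex.mul_re, Complex.conj_re, Complex.conj_im]; ring
    rw [h3, h4, h5]; simp [Complex.sub_re, Complex.sub_im]; ring
  have hden : ‖1 - (starRingEnd ℂ) a * u‖ ^ 2 = 1 - 2*d + t^2*s^2 := by
    rw [Complex.sq_norm, Complex.normSq_apply]
    have h6 : (1 - (starRingEnd ℂ) a * u).re = 1 - d := by
      simp [Complex.sub_re, hdd]
    have h7 : (1 - (starRingEnd ℂ) a * u).im = -ee := by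
      simp [Complex.sub_im, hee]
    rw [h6, h7, ← hsq]; ring
  have hdenpos : 0 < ‖1 - (starRingEnd ℂ) a * u‖ := by
    rcases (norm_nonneg (1 - (starRingEnd ℂ) a * u)).lt_or_eq with h | h
    · exact h
    · exfalso
      have h8 : (0:ℝ)^2 = 1 - 2*d + t^2*s^2 := by rw [← hden, ← h]
      have h9 : |d| ≤ t * s := by
        have := Complex.abs_re_le_norm ((starRingEnd ℂ) a * u)
        rwa [norm_mul, Complex.norm_conj, ← ht, ← hs] at this
      have h10 : d ≤ t * s := le_trans (le_abs_self d) h9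
      have hts : t * s < 1 := by nlinarith
      nlinarith [mul_pos (sub_pos.2 hts) (sub_pos.2 hts)]
  rw [norm_div, div_le_one hdenpos]
  have h9 : |d| ≤ t * s := by
    have := Complex.abs_re_le_norm ((starRingEnd ℂ) a * u)
    rwa [norm_mul, Complex.norm_conj, ← ht, ← hs] at this
  have h10 : d ≤ t * s := le_trans (le_abs_self d) h9
  have h11 : -(t*s) ≤ d := neg_le_of_abs_le h9
  have hsq1 : ‖u - a‖^2 ≤ ‖1 - (starRingEnd ℂ) a * u‖^2 := by
    rw [hnum, hden]
    nlinarith [mul_nonneg (sub_nonneg.2 hu) (sub_nonneg.2 ha.le),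
      mul_nonneg (mul_nonneg hs0 ht0) (mul_nonneg hs0 ht0)]
  exact le_of_pow_le_pow_left₀ (by norm_num) hdenpos.le hsq1

private lemma my_mobius_bound {u a : ℂ} (hu : ‖u‖ ≤ 1) (ha : ‖a‖ < 1) :
    ‖(u + a) / (1 + (starRingEnd ℂ) a * u)‖ ≤
      (‖u‖ + ‖a‖) / (1 + ‖a‖ * ‖u‖) := by
  set s := ‖u‖ with hs
  set t := ‖a‖ with ht
  have hs0 : 0 ≤ s := norm_nonneg u
  have ht0 : 0 ≤ t := norm_nonneg a
  set d := ((starRingEnd ℂ) a * u).re with hdd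
  set ee := ((starRingEnd ℂ) a * u).im with hee
  have hsq : d^2 + ee^2 = t^2 * s^2 := by
    have h1 : Complex.normSq ((starRingEnd ℂ) a * u) = d^2 + ee^2 := by
      rw [Complex.normSq_apply]; ring
    have h2 : Complex.normSq ((starRingEnd ℂ) a * u) = (t * s)^2 := by
      rw [← Complex.sq_norm, norm_mul, Complex.norm_conj]
    rw [h1] at h2; rw [h2]; ring
  have h9 : |d| ≤ t * s := by
    have := Complex.abs_re_le_norm ((starRingEnd ℂ) a * u)
    rwa [norm_mul, Complex.norm_conj, ← ht, ← hs] at this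
  have h10 : d ≤ t * s := le_trans (le_abs_self d) h9
  have h11 : -(t*s) ≤ d := neg_le_of_abs_le h9
  have hnum : ‖u + a‖ ^ 2 = s^2 + t^2 + 2*d := by
    rw [Complex.sq_norm, Complex.normSq_apply]
    have h3 : s^2 = u.re^2 + u.im^2 := by
      rw [hs, Complex.sq_norm, Complex.normSq_apply]; ring
    have h4 : t^2 = a.re^2 + a.im^2 := by
      rw [ht, Complex.sq_norm, Complex.normSq_apply]; ring
    have h5 : d = a.re * u.re + a.im * u.im := by
      rw [hdd, Complex.mul_re, Complex.conj_re, Complex.conj_im]; ring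
    rw [h3, h4, h5]; simp [Complex.add_re, Complex.add_im]; ring
  have hden : ‖1 + (starRingEnd ℂ) a * u‖ ^ 2 = 1 + 2*d + t^2*s^2 := by
    rw [Complex.sq_norm, Complex.normSq_apply]
    have h6 : (1 + (starRingEnd ℂ) a * u).re = 1 + d := by
      simp [Complex.add_re, hdd]
    have h7 : (1 + (starRingEnd ℂ) a * u).im = ee := by
      simp [Complex.add_im, hee]
    rw [h6, h7, ← hsq]; ring
  have hdenpos : 0 < ‖1 + (starRingEnd ℂ) a * u‖ := by
    rcases (norm_nonneg (1 + (starRingEnd ℂ) a * u)).lt_or_eq with h | h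
    · exact h
    · exfalso
      have h8 : (0:ℝ)^2 = 1 + 2*d + t^2*s^2 := by rw [← hden, ← h]
      have hts : t * s < 1 := by nlinarith
      nlinarith [mul_pos (sub_pos.2 hts) (sub_pos.2 hts)]
  have hdenpos2 : (0:ℝ) < 1 + t * s := by nlinarith
  rw [norm_div, div_le_div_iff₀ hdenpos hdenpos2]
  have hkey : ‖u + a‖^2 * (1 + t*s)^2 ≤
      (s + t)^2 * ‖1 + (starRingEnd ℂ) a * u‖^2 := by
    rw [hnum, hden]
    nlinarith [mul_nonneg (sub_nonneg.2 (sub_nonneg.2 h10))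
        (mul_nonneg (mul_nonneg (mul_nonneg (by linarith : (0:ℝ) ≤ 1+s) (by linarith : (0:ℝ) ≤ 1+t))
          (by linarith : (0:ℝ) ≤ 1-s)) (by linarith : (0:ℝ) ≤ 1-t)),
      mul_nonneg (sub_nonneg.2 h10) (mul_nonneg (mul_nonneg (mul_nonneg
        (by linarith : (0:ℝ) ≤ 1+s) (by linarith : (0:ℝ) ≤ 1+t))
        (by linarith : (0:ℝ) ≤ 1-s)) (by linarith : (0:ℝ) ≤ 1-t))]
  have h12 : 0 ≤ (s + t) * ‖1 + (starRingEnd ℂ) a * u‖ := by positivity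
  have h13 : ‖u + a‖ * (1 + t*s) ≥ 0 := by positivity
  nlinarith [hkey, sq_nonneg (‖u+a‖ * (1+t*s) - (s+t) * ‖1 + (starRingEnd ℂ) a * u‖)]

private lemma my_mono1 {x y t : ℝ} (hx : 0 ≤ x) (hxy : x ≤ y) (hy : y ≤ 1)
    (ht : 0 ≤ t) (ht1 : t ≤ 1) :
    (x + t) / (1 + t * x) ≤ (y + t) / (1 + t * y) := by
  rw [div_le_div_iff₀ (by nlinarith) (by nlinarith)]
  nlinarith [mul_nonneg (sub_nonneg.2 hxy) (mul_nonneg (sub_nonneg.2 ht1) ht)]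

private lemma my_mono2 {s t c : ℝ} (hs : 0 ≤ s) (hs1 : s ≤ 1) (ht : 0 ≤ t) (htc : t ≤ c) :
    (s + t) / (1 + t * s) ≤ (s + c) / (1 + c * s) := by
  have hc : 0 ≤ c := le_trans ht htc
  rw [div_le_div_iff₀ (by nlinarith) (by nlinarith)]
  nlinarith [mul_nonneg (sub_nonneg.2 htc) (mul_nonneg (sub_nonneg.2 hs1) hs)]

private lemma my_abs_sin_sq (ζ : ℂ) :
    ‖Complex.sin ζ‖ ^ 2 = Real.sin ζ.re ^ 2 + Real.sinh ζ.im ^ 2 := by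
  set x := ζ.re
  set y := ζ.im
  have hζ : ζ = (x:ℂ) + (y:ℂ) * I := (Complex.re_add_im ζ).symm
  have hsin : Complex.sin ζ = ((Real.sin x * Real.cosh y : ℝ) : ℂ) +
      ((Real.cos x * Real.sinh y : ℝ) : ℂ) * I := by
    rw [hζ, Complex.sin_add, Complex.sin_mul_I, Complex.cos_mul_I]
    push_cast
    rw [← Complex.ofReal_sin, ← Complex.ofReal_cos, ← Complex.ofReal_sinh, ← Complex.ofReal_cosh]
    ring
  rw [hsin, Complex.sq_norm, Complex.normSq_add_mul_I]
  nlinarith [Real.sin_sq_add_cos_sq x, Real.cosh_sq y]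

private lemma my_abs_cos_sq (ζ : ℂ) :
    ‖Complex.cos ζ‖ ^ 2 = Real.cos ζ.re ^ 2 + Real.sinh ζ.im ^ 2 := by
  set x := ζ.re
  set y := ζ.im
  have hζ : ζ = (x:ℂ) + (y:ℂ) * I := (Complex.re_add_im ζ).symm
  have hcos : Complex.cos ζ = ((Real.cos x * Real.cosh y : ℝ) : ℂ) +
      ((-(Real.sin x * Real.sinh y) : ℝ) : ℂ) * I := by
    rw [hζ, Complex.cos_add, Complex.sin_mul_I, Complex.cos_mul_I]
    push_cast
    rw [← Complex.ofReal_sin, ← Complex.ofReal_cos, ← Complex.ofReal_sinh, ← Complex.ofReal_cosh]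
    ring
  rw [hcos, Complex.sq_norm, Complex.normSq_add_mul_I]
  nlinarith [Real.sin_sq_add_cos_sq x, Real.cosh_sq y]

private lemma my_cos_sq_gt (x : ℝ) (h : |x| < π/4) : Real.sin x ^ 2 < Real.cos x ^ 2 := by
  have h2 : 0 < Real.cos (2 * x) := by
    apply Real.cos_pos_of_mem_Ioo
    have h' := abs_lt.1 h
    have hπ := Real.pi_pos
    refine Set.mem_Ioo.2 ⟨by linarith [h'.1], by linarith [h'.2]⟩
  nlinarith [Real.sin_sq_add_cos_sq x, Real.cos_two_mul x, h2]

private lemma my_tan_lt_one {ζ : ℂ} (hre : |ζ.re| < π/4) :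
    ‖Complex.tan ζ‖ < 1 := by
  have h1 := my_abs_sin_sq ζ
  have h2 := my_abs_cos_sq ζ
  have h3 := my_cos_sq_gt ζ.re hre
  have h4 : ‖Complex.sin ζ‖ ^ 2 < ‖Complex.cos ζ‖ ^ 2 := by
    rw [h1, h2]; linarith
  have h5 : ‖Complex.sin ζ‖ < ‖Complex.cos ζ‖ :=
    lt_of_pow_lt_pow_left₀ 2 (norm_nonneg _) h4
  have h6 : 0 < ‖Complex.cos ζ‖ :=
    lt_of_le_of_lt (norm_nonneg _) h5
  rw [Complex.tan_eq_sin_div_cos, norm_div, div_lt_one h6]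
  exact h5

private lemma my_tan_ge {ζ : ℂ} (h0 : 0 ≤ ζ.re) (hre : ζ.re < π/4) :
    Real.tan ζ.re ≤ ‖Complex.tan ζ‖ := by
  set x := ζ.re
  have hx2 : |x| < π/4 := by rw [_root_.abs_of_nonneg h0]; exact hre
  have hcp : 0 < Real.cos x := by
    apply Real.cos_pos_of_mem_Ioo
    constructor
    · have := Real.pi_pos; simp; linarith
    · linarith [Real.pi_pos]
  have hsn : 0 ≤ Real.sin x := by
    apply Real.sin_nonneg_of_nonneg_of_le_pi h0
    linarith [Real.pi_pos]
  have h1 := my_abs_sin_sq ζ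
  have h2 := my_abs_cos_sq ζ
  have h3 := my_cos_sq_gt x hx2
  have hcζ : 0 < ‖Complex.cos ζ‖ := by
    have hpos : 0 < ‖Complex.cos ζ‖ ^ 2 := by
      rw [h2]; nlinarith
    rcases (norm_nonneg (Complex.cos ζ)).lt_or_eq with h'|h'
    · exact h'
    · exfalso; rw [← h'] at hpos; norm_num at hpos
  rw [Real.tan_eq_sin_div_cos, Complex.tan_eq_sin_div_cos, norm_div,
    div_le_div_iff₀ hcp hcζ]
  have hkey : (Real.sin x * ‖Complex.cos ζ‖)^2 ≤
      (‖Complex.sin ζ‖ * Real.cos x)^2 := by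
    rw [mul_pow, mul_pow, h1, h2]
    nlinarith [sq_nonneg (Real.sinh ζ.im)]
  have hr : 0 ≤ ‖Complex.sin ζ‖ * Real.cos x := by positivity
  exact le_of_pow_le_pow_left₀ (by norm_num) hr hkey

private lemma my_cos_ne {ζ : ℂ} (h : |ζ.re| < π/2) : Complex.cos ζ ≠ 0 := by
  intro h0
  rw [Complex.cos_eq_zero_iff] at h0
  obtain ⟨k, hk⟩ := h0
  have hre : ζ.re = (2 * (k:ℝ) + 1) * π / 2 := by
    rw [hk]
    have : ((2 * (k:ℂ) + 1) * (π:ℂ) / 2) = (((2 * (k:ℝ) + 1) * π / 2 : ℝ) : ℂ) := by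
      push_cast; ring
    rw [this, Complex.ofReal_re]
  rw [hre] at h
  have hπ := Real.pi_pos
  rcases le_or_gt 0 k with hk0 | hk0
  · have : (0:ℝ) ≤ (k:ℝ) := by exact_mod_cast hk0
    rw [_root_.abs_of_nonneg (by positivity)] at h
    nlinarith
  · have : (k:ℝ) ≤ -1 := by exact_mod_cast Int.le_sub_one_of_lt hk0
    have hneg : (2 * (k:ℝ) + 1) * π / 2 ≤ -(π/2) := by nlinarith
    rw [_root_.abs_of_nonpos (by nlinarith)] at h
    nlinarith

set_option maxHeartbeats 1000000 in
open Filter Topology in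
theorem improved_harmonic_schwarz
    (h g : ℂ → ℂ) (p : ℕ) (hp : 1 ≤ p)
    (hh : DifferentiableOn ℂ h (ball (0:ℂ) 1))
    (hg : DifferentiableOn ℂ g (ball (0:ℂ) 1))
    (hg0 : g 0 = 0)
    (hsp : ∀ z ∈ ball (0:ℂ) 1, ‖deriv g z‖ < ‖deriv h z‖)
    (hmaps : ∀ z ∈ ball (0:ℂ) 1, ‖h z + (starRingEnd ℂ) (g z)‖ < 1)
    (hzero : ∀ k < p, iteratedDeriv k h 0 = 0 ∧ iteratedDeriv k g 0 = 0)
    (horder : ‖iteratedDeriv p g 0‖ < ‖iteratedDeriv p h 0‖) :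
    ∀ z ∈ ball (0:ℂ) 1,
      ‖h z + (starRingEnd ℂ) (g z)‖ ≤
        (4 / π) * Real.arctan ((‖z‖) ^ p *
          ((‖z‖ + (π / 4) *
              (‖iteratedDeriv p h 0‖ / (p.factorial : ℝ) +
               ‖iteratedDeriv p g 0‖ / (p.factorial : ℝ))) /
            (1 + (π / 4) *
              (‖iteratedDeriv p h 0‖ / (p.factorial : ℝ) +
               ‖iteratedDeriv p g 0‖ / (p.factorial : ℝ)) * ‖z‖))) := by
  intro z₀ hz₀
  have hπ := Real.pi_pos
  set A := iteratedDeriv p h 0 with hA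
  set B := iteratedDeriv p g 0 with hB
  set c : ℝ := (π / 4) * (‖A‖ / (p.factorial : ℝ) + ‖B‖ / (p.factorial : ℝ))
    with hc
  have hc0 : 0 ≤ c := by
    have : (0:ℝ) ≤ ‖A‖ / (p.factorial : ℝ) + ‖B‖ / (p.factorial : ℝ) := by
      positivity
    positivity
  set s : ℝ := ‖z₀‖ with hsdef
  have hs0 : 0 ≤ s := norm_nonneg z₀
  have hs1 : s < 1 := by rwa [mem_ball_zero_iff] at hz₀
  set T : ℝ := s ^ p * ((s + c) / (1 + c * s)) with hT
  have hdenT : (0:ℝ) < 1 + c * s := by nlinarith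
  have hT0 : 0 ≤ T := by
    apply mul_nonneg (pow_nonneg hs0 p)
    apply div_nonneg (by linarith) hdenT.le
  have hRHS0 : 0 ≤ (4 / π) * Real.arctan T := by
    apply mul_nonneg (by positivity)
    rw [← Real.arctan_zero]
    exact Real.arctan_strictMono.monotone hT0
  -- goal restated
  show ‖h z₀ + (starRingEnd ℂ) (g z₀)‖ ≤ (4 / π) * Real.arctan T
  set m : ℝ := ‖h z₀ + (starRingEnd ℂ) (g z₀)‖ with hm
  rcases eq_or_lt_of_le (norm_nonneg (h z₀ + (starRingEnd ℂ) (g z₀))) with hm0 | hm0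
  · have hmz : m = 0 := hm.trans hm0.symm
    rw [hmz]; exact hRHS0
  -- now m > 0
  have hm1 : m < 1 := hmaps z₀ hz₀
  have h00 : h 0 = 0 := by
    have := (hzero 0 (by omega)).1
    simpa [iteratedDeriv_zero] using this
  have hz₀ne : z₀ ≠ 0 := by
    intro hzz
    rw [hzz, h00, hg0] at hm0
    simp at hm0
  have hsp0 : 0 < s := by
    rcases hs0.lt_or_eq with h' | h'
    · exact h'
    · exact absurd (norm_eq_zero.1 h'.symm) hz₀ne
  set e : ℂ := (h z₀ + (starRingEnd ℂ) (g z₀)) / (m : ℂ) with he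
  have hmne : (m : ℂ) ≠ 0 := by
    simp only [ne_eq, Complex.ofReal_eq_zero]
    linarith
  have habse : ‖e‖ = 1 := by
    rw [he, norm_div, Complex.norm_real, Real.norm_eq_abs, _root_.abs_of_pos hm0, ← hm, div_self hm0.ne']
  set F : ℂ → ℂ := fun ζ => (starRingEnd ℂ) e * h ζ + e * g ζ with hF
  have hFdiff : DifferentiableOn ℂ F (ball (0:ℂ) 1) :=
    (hh.const_mul _).add (hg.const_mul _)
  have hFanal : AnalyticAt ℂ F 0 := hFdiff.analyticAt (ball_mem_nhds 0 one_pos)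
  have hF0 : F 0 = 0 := by rw [hF]; simp [h00, hg0]
  -- real part estimates
  have hFre : ∀ ζ, (F ζ).re = ((starRingEnd ℂ) e * (h ζ + (starRingEnd ℂ) (g ζ))).re := by
    intro ζ
    have h1 : ((starRingEnd ℂ) e * (starRingEnd ℂ) (g ζ)) = (starRingEnd ℂ) (e * g ζ) := by
      rw [map_mul]
    rw [hF]
    simp only [mul_add, Complex.add_re, h1, Complex.conj_re]
  have hFre_lt : ∀ ζ ∈ ball (0:ℂ) 1, |(F ζ).re| < 1 := by
    intro ζ hζ
    rw [hFre ζ]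
    calc |((starRingEnd ℂ) e * (h ζ + (starRingEnd ℂ) (g ζ))).re|
        ≤ ‖(starRingEnd ℂ) e * (h ζ + (starRingEnd ℂ) (g ζ))‖ :=
          Complex.abs_re_le_norm _
      _ = ‖h ζ + (starRingEnd ℂ) (g ζ)‖ := by
          rw [norm_mul, Complex.norm_conj, habse, one_mul]
      _ < 1 := hmaps ζ hζ
  have hFz₀re : (F z₀).re = m := by
    rw [hFre z₀]
    have : (starRingEnd ℂ) e * (h z₀ + (starRingEnd ℂ) (g z₀)) = (m : ℂ) := by
      rw [he, map_div₀]
      rw [div_mul_eq_mul_div]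
      rw [Complex.conj_ofReal]
      rw [← Complex.normSq_eq_conj_mul_self]
      rw [Complex.normSq_eq_norm_sq, ← hm]
      rw [div_eq_iff hmne]
      push_cast
      ring
    rw [this, Complex.ofReal_re]
  -- the analytic function G
  set cπ : ℝ := π / 4 with hcπ
  set G : ℂ → ℂ := fun ζ => Complex.tan ((cπ : ℂ) * F ζ) with hG
  have hre_inner : ∀ ζ ∈ ball (0:ℂ) 1, |((cπ : ℂ) * F ζ).re| < π/4 := by
    intro ζ hζ
    rw [Complex.re_ofReal_mul, abs_mul, abs_of_pos (by positivity : (0:ℝ) < cπ), hcπ]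
    have := hFre_lt ζ hζ
    nlinarith [abs_nonneg (F ζ).re]
  have hGdiff : DifferentiableOn ℂ G (ball (0:ℂ) 1) := by
    intro ζ hζ
    have hcos : Complex.cos ((cπ : ℂ) * F ζ) ≠ 0 := by
      apply my_cos_ne
      have := hre_inner ζ hζ
      linarith
    exact (Complex.differentiableAt_tan.2 hcos).comp_differentiableWithinAt ζ
      ((hFdiff ζ hζ).const_mul _)
  have hGanal : AnalyticAt ℂ G 0 := hGdiff.analyticAt (ball_mem_nhds 0 one_pos)
  have hGlt : ∀ ζ ∈ ball (0:ℂ) 1, ‖G ζ‖ < 1 := by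
    intro ζ hζ
    exact my_tan_lt_one (hre_inner ζ hζ)
  -- limit of F z / z^p
  have hFvanish : ∀ k < p, iteratedDeriv k F 0 = 0 := by
    intro k hk
    have hmem : (0:ℂ) ∈ ball (0:ℂ) 1 := mem_ball_self one_pos
    have hu : UniqueDiffOn ℂ (ball (0:ℂ) 1) := isOpen_ball.uniqueDiffOn
    have hhc : ContDiffOn ℂ (k:WithTop ℕ∞) h (ball (0:ℂ) 1) := hh.contDiffOn isOpen_ball
    have hgc : ContDiffOn ℂ (k:WithTop ℕ∞) g (ball (0:ℂ) 1) := hg.contDiffOn isOpen_ball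
    have hhc' : ContDiffOn ℂ (k:WithTop ℕ∞) (fun ζ => (starRingEnd ℂ) e * h ζ) (ball (0:ℂ) 1) := by
      simpa [smul_eq_mul] using hhc.const_smul ((starRingEnd ℂ) e)
    have hgc' : ContDiffOn ℂ (k:WithTop ℕ∞) (fun ζ => e * g ζ) (ball (0:ℂ) 1) := by
      simpa [smul_eq_mul] using hgc.const_smul e
    have conv : ∀ (f : ℂ → ℂ), iteratedDeriv k f 0 = iteratedDerivWithin k f (ball (0:ℂ) 1) 0 := by
      intro f
      rw [iteratedDerivWithin_eq_iteratedFDerivWithin, iteratedDeriv_eq_iteratedFDeriv,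
        iteratedFDerivWithin_of_isOpen k isOpen_ball hmem]
    have e1 : iteratedDeriv k F 0 =
        (starRingEnd ℂ) e * iteratedDeriv k h 0 + e * iteratedDeriv k g 0 := by
      rw [conv F, conv h, conv g]
      have hadd : iteratedDerivWithin k
          ((fun ζ => (starRingEnd ℂ) e * h ζ) + (fun ζ => e * g ζ)) (ball (0:ℂ) 1) 0 =
          iteratedDerivWithin k (fun ζ => (starRingEnd ℂ) e * h ζ) (ball (0:ℂ) 1) 0 +
          iteratedDerivWithin k (fun ζ => e * g ζ) (ball (0:ℂ) 1) 0 :=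
        iteratedDerivWithin_add hmem hu (hhc' 0 hmem) (hgc' 0 hmem)
      have : F = (fun ζ => (starRingEnd ℂ) e * h ζ) + (fun ζ => e * g ζ) := rfl
      rw [this, hadd, iteratedDerivWithin_const_mul hmem hu _ (hhc 0 hmem),
        iteratedDerivWithin_const_mul hmem hu _ (hgc 0 hmem)]
    rw [e1, (hzero k hk).1, (hzero k hk).2, mul_zero, mul_zero, add_zero]
  have hFp : iteratedDeriv p F 0 = (starRingEnd ℂ) e * A + e * B := by
    have hmem : (0:ℂ) ∈ ball (0:ℂ) 1 := mem_ball_self one_pos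
    have hu : UniqueDiffOn ℂ (ball (0:ℂ) 1) := isOpen_ball.uniqueDiffOn
    have hhc : ContDiffOn ℂ (p:WithTop ℕ∞) h (ball (0:ℂ) 1) := hh.contDiffOn isOpen_ball
    have hgc : ContDiffOn ℂ (p:WithTop ℕ∞) g (ball (0:ℂ) 1) := hg.contDiffOn isOpen_ball
    have hhc' : ContDiffOn ℂ (p:WithTop ℕ∞) (fun ζ => (starRingEnd ℂ) e * h ζ) (ball (0:ℂ) 1) := by
      simpa [smul_eq_mul] using hhc.const_smul ((starRingEnd ℂ) e)
    have hgc' : ContDiffOn ℂ (p:WithTop ℕ∞) (fun ζ => e * g ζ) (ball (0:ℂ) 1) := by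
      simpa [smul_eq_mul] using hgc.const_smul e
    have conv : ∀ (f : ℂ → ℂ), iteratedDeriv p f 0 = iteratedDerivWithin p f (ball (0:ℂ) 1) 0 := by
      intro f
      rw [iteratedDerivWithin_eq_iteratedFDerivWithin, iteratedDeriv_eq_iteratedFDeriv,
        iteratedFDerivWithin_of_isOpen p isOpen_ball hmem]
    rw [hA, hB, conv F, conv h, conv g]
    have hadd : iteratedDerivWithin p
        ((fun ζ => (starRingEnd ℂ) e * h ζ) + (fun ζ => e * g ζ)) (ball (0:ℂ) 1) 0 =
        iteratedDerivWithin p (fun ζ => (starRingEnd ℂ) e * h ζ) (ball (0:ℂ) 1) 0 +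
        iteratedDerivWithin p (fun ζ => e * g ζ) (ball (0:ℂ) 1) 0 :=
      iteratedDerivWithin_add hmem hu (hhc' 0 hmem) (hgc' 0 hmem)
    have : F = (fun ζ => (starRingEnd ℂ) e * h ζ) + (fun ζ => e * g ζ) := rfl
    rw [this, hadd, iteratedDerivWithin_const_mul hmem hu _ (hhc 0 hmem),
      iteratedDerivWithin_const_mul hmem hu _ (hgc 0 hmem)]
  set LF : ℂ := (p.factorial : ℂ)⁻¹ * iteratedDeriv p F 0 with hLF
  have hlimF : Tendsto (fun z => F z / z ^ p) (𝓝[≠] (0:ℂ)) (𝓝 LF) :=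
    my_vanish_limit p F hFanal hFvanish
  -- limit of G z / z^p
  set LG : ℂ := (cπ : ℂ) * LF with hLG
  have htan_eq : ∀ w : ℂ, Complex.tan w = w * dslope Complex.tan 0 w := by
    intro w
    have := sub_smul_dslope Complex.tan 0 w
    rw [sub_zero, Complex.tan_zero, sub_zero, smul_eq_mul] at this
    exact this.symm
  have hkeyG : ∀ z : ℂ, G z / z ^ p =
      dslope Complex.tan 0 ((cπ : ℂ) * F z) * ((cπ : ℂ) * (F z / z ^ p)) := by
    intro z
    rw [hG]
    simp only
    rw [htan_eq ((cπ : ℂ) * F z)]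
    ring
  have hdtan_cont : ContinuousAt (dslope Complex.tan 0) 0 := by
    apply continuousAt_dslope_same.2
    apply Complex.differentiableAt_tan.2
    rw [Complex.cos_zero]; norm_num
  have hdtan0 : dslope Complex.tan 0 0 = 1 := by
    rw [dslope_same, Complex.deriv_tan, Complex.cos_zero]; norm_num
  have hinner_tendsto : Tendsto (fun z => (cπ : ℂ) * F z) (𝓝[≠] (0:ℂ)) (𝓝 0) := by
    have h1 : Tendsto F (𝓝 (0:ℂ)) (𝓝 (F 0)) := hFanal.continuousAt.tendsto
    have h2 : Tendsto (fun z => (cπ : ℂ) * F z) (𝓝 (0:ℂ)) (𝓝 ((cπ : ℂ) * F 0)) :=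
      (tendsto_const_nhds.mul h1)
    rw [hF0, mul_zero] at h2
    exact h2.mono_left nhdsWithin_le_nhds
  have hlimG : Tendsto (fun z => G z / z ^ p) (𝓝[≠] (0:ℂ)) (𝓝 LG) := by
    have h1 : Tendsto (fun z => dslope Complex.tan 0 ((cπ : ℂ) * F z)) (𝓝[≠] (0:ℂ)) (𝓝 1) := by
      have := hdtan_cont.tendsto.comp hinner_tendsto
      rwa [hdtan0] at this
    have h2 : Tendsto (fun z => (cπ : ℂ) * (F z / z ^ p)) (𝓝[≠] (0:ℂ)) (𝓝 ((cπ : ℂ) * LF)) :=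
      tendsto_const_nhds.mul hlimF
    have h3 := h1.mul h2
    rw [one_mul] at h3
    refine h3.congr ?_
    intro z
    exact (hkeyG z).symm
  obtain ⟨hψanal, hψ0, hψeq⟩ := my_iter_dslope G hGanal p LG hlimG
  set ψ : ℂ → ℂ := (Function.swap dslope 0)^[p] G with hψ
  -- ψ is differentiable on the ball
  have hψdiff : DifferentiableOn ℂ ψ (ball (0:ℂ) 1) := by
    intro ζ hζ
    by_cases hζ0 : ζ = 0
    · rw [hζ0]
      exact hψanal.differentiableAt.differentiableWithinAt
    · have base : DifferentiableWithinAt ℂ (fun z => G z / z ^ p) (ball (0:ℂ) 1) ζ := by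
        exact (hGdiff ζ hζ).div ((differentiable_pow p).differentiableAt.differentiableWithinAt)
          (pow_ne_zero p hζ0)
      apply base.congr_of_eventuallyEq ?_ (hψeq ζ hζ0)
      have hne : {z : ℂ | z ≠ 0} ∈ 𝓝[ball (0:ℂ) 1] ζ :=
        mem_nhdsWithin_of_mem_nhds (isOpen_ne.mem_nhds hζ0)
      filter_upwards [hne] with z hz
      exact hψeq z hz
  -- |ψ| ≤ 1 on the ball
  have hψle : ∀ ζ ∈ ball (0:ℂ) 1, ‖ψ ζ‖ ≤ 1 := by
    apply my_maxmod ψ hψdiff p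
    intro ζ hζ
    by_cases hζ0 : ζ = 0
    · rw [hζ0]
      simp only [norm_zero]
      rw [zero_pow (by omega : p ≠ 0), mul_zero]
      norm_num
    · rw [hψeq ζ hζ0, norm_div, norm_pow]
      rw [div_mul_cancel₀ _ (pow_ne_zero p (norm_ne_zero_iff.mpr hζ0))]
      exact (hGlt ζ hζ).le
  -- |ψ 0| ≤ c
  set t : ℝ := ‖ψ 0‖ with htdef
  have ht0 : 0 ≤ t := norm_nonneg _
  have ht1 : t ≤ 1 := hψle 0 (mem_ball_self one_pos)
  have htc : t ≤ c := by
    rw [htdef, hψ0, hLG, norm_mul, Complex.norm_real, Real.norm_eq_abs, abs_of_pos (by positivity : (0:ℝ) < cπ)]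
    rw [hLF, norm_mul, norm_inv, hFp]
    have hfac : ‖(p.factorial : ℂ)‖ = (p.factorial : ℝ) := by
      rw [Complex.norm_natCast]
    have htri : ‖(starRingEnd ℂ) e * A + e * B‖ ≤
        ‖A‖ + ‖B‖ := by
      calc ‖(starRingEnd ℂ) e * A + e * B‖
          ≤ ‖(starRingEnd ℂ) e * A‖ + ‖e * B‖ := norm_add_le _ _
        _ = ‖A‖ + ‖B‖ := by
            rw [norm_mul, norm_mul, Complex.norm_conj, habse, one_mul, one_mul]
    rw [hfac, hc, hcπ]
    have hfacpos : (0:ℝ) < (p.factorial : ℝ) := by exact_mod_cast p.factorial_pos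
    rw [← add_div]
    calc π / 4 * ((p.factorial:ℝ)⁻¹ * ‖(starRingEnd ℂ) e * A + e * B‖)
        ≤ π / 4 * ((p.factorial:ℝ)⁻¹ * (‖A‖ + ‖B‖)) := by
          apply mul_le_mul_of_nonneg_left ?_ (by positivity)
          exact mul_le_mul_of_nonneg_left htri (by positivity)
      _ = π / 4 * ((‖A‖ + ‖B‖) / (p.factorial:ℝ)) := by
          rw [inv_mul_eq_div]
  -- Schwarz–Pick step: |ψ z₀| ≤ (s + t)/(1 + t s)
  have hSP : ‖ψ z₀‖ ≤ (s + t) / (1 + t * s) := by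
    rcases lt_or_ge t 1 with ht1' | ht1'
    · set a : ℂ := ψ 0 with ha
      have hane : ‖a‖ < 1 := ht1'
      set χ : ℂ → ℂ := fun ζ => (ψ ζ - a) / (1 - (starRingEnd ℂ) a * ψ ζ) with hχ
      have hden : ∀ ζ ∈ ball (0:ℂ) 1, 1 - (starRingEnd ℂ) a * ψ ζ ≠ 0 := by
        intro ζ hζ
        intro hcontra
        have h1 : (1:ℂ) = (starRingEnd ℂ) a * ψ ζ := by
          have := sub_eq_zero.1 hcontra; exact this
        have h2 : (1:ℝ) = ‖(starRingEnd ℂ) a * ψ ζ‖ := by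
          rw [← h1]; simp
        rw [norm_mul, Complex.norm_conj] at h2
        have h3 : ‖a‖ * ‖ψ ζ‖ ≤ t * 1 := by
          apply mul_le_mul (le_refl _) (hψle ζ hζ) (norm_nonneg _) ht0
        rw [mul_one] at h3
        linarith
      have hχdiff : DifferentiableOn ℂ χ (ball (0:ℂ) 1) := by
        apply DifferentiableOn.div
        · exact hψdiff.sub (differentiableOn_const a)
        · exact (differentiableOn_const 1).sub ((differentiableOn_const _).mul hψdiff)
        · exact hden
      have hχ0 : χ 0 = 0 := by rw [hχ]; simp [← ha]
      have hχle : ∀ ζ ∈ ball (0:ℂ) 1, ‖χ ζ‖ ≤ 1 := by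
        intro ζ hζ
        exact my_mobius_le_one (hψle ζ hζ) hane
      -- Schwarz: |χ z₀| ≤ s
      have hχanal : AnalyticAt ℂ χ 0 := hχdiff.analyticAt (ball_mem_nhds 0 one_pos)
      obtain ⟨qχ, hqχ⟩ := hχanal
      have hdχanal : AnalyticAt ℂ (dslope χ 0) 0 :=
        (hqχ.has_fpower_series_dslope_fslope).analyticAt
      have hdχdiff : DifferentiableOn ℂ (dslope χ 0) (ball (0:ℂ) 1) := by
        intro ζ hζ
        by_cases hζ0 : ζ = 0
        · rw [hζ0]; exact hdχanal.differentiableAt.differentiableWithinAt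
        · exact (differentiableWithinAt_dslope_of_ne hζ0).2 (hχdiff ζ hζ)
      have hdχle : ∀ ζ ∈ ball (0:ℂ) 1, ‖dslope χ 0 ζ‖ ≤ 1 := by
        apply my_maxmod _ hdχdiff 1
        intro ζ hζ
        by_cases hζ0 : ζ = 0
        · rw [hζ0]; simp
        · rw [dslope_of_ne _ hζ0, slope_def_field, hχ0, sub_zero, sub_zero, norm_div, pow_one]
          rw [div_mul_cancel₀ _ (by simpa using hζ0 : ‖ζ‖ ≠ 0)]
          exact hχle ζ hζ
      have hχz₀ : ‖χ z₀‖ ≤ s := by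
        have h1 := sub_smul_dslope χ 0 z₀
        rw [sub_zero, hχ0, sub_zero, smul_eq_mul] at h1
        rw [← h1, norm_mul]
        calc ‖z₀‖ * ‖dslope χ 0 z₀‖
            ≤ ‖z₀‖ * 1 := by
              apply mul_le_mul_of_nonneg_left (hdχle z₀ hz₀) (norm_nonneg _)
          _ = s := by rw [mul_one]
      -- recover ψ z₀
      have hden2 : 1 + (starRingEnd ℂ) a * χ z₀ ≠ 0 := by
        intro hcontra
        have h1 : ‖(starRingEnd ℂ) a * χ z₀‖ ≤ t * s := by
          rw [norm_mul, Complex.norm_conj]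
          exact mul_le_mul (le_refl _) hχz₀ (norm_nonneg _) ht0
        have h2 : (starRingEnd ℂ) a * χ z₀ = -1 := by linear_combination hcontra
        rw [h2] at h1
        simp at h1
        nlinarith
      have hrec : ψ z₀ = (χ z₀ + a) / (1 + (starRingEnd ℂ) a * χ z₀) := by
        have e1 : χ z₀ * (1 - (starRingEnd ℂ) a * ψ z₀) = ψ z₀ - a := by
          rw [hχ]
          exact div_mul_cancel₀ _ (hden z₀ hz₀)
        rw [eq_div_iff hden2]
        linear_combination (-1 : ℂ) * e1
      rw [hrec]
      have hub : ‖χ z₀‖ ≤ 1 := hχle z₀ hz₀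
      calc ‖(χ z₀ + a) / (1 + (starRingEnd ℂ) a * χ z₀)‖
          ≤ (‖χ z₀‖ + ‖a‖) /
              (1 + ‖a‖ * ‖χ z₀‖) := my_mobius_bound hub hane
        _ ≤ (s + t) / (1 + t * s) := by
            exact my_mono1 (norm_nonneg _) hχz₀ hs1.le ht0 ht1
    · have hteq : t = 1 := le_antisymm ht1 ht1'
      rw [hteq]
      have : (s + 1) / (1 + 1 * s) = 1 := by
        rw [one_mul]
        rw [div_eq_one_iff_eq (by linarith)]
        ring
      rw [this]
      exact hψle z₀ hz₀
  -- chain of inequalities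
  have hGz₀ : ‖G z₀‖ ≤ T := by
    have hzp : (z₀ : ℂ) ^ p ≠ 0 := pow_ne_zero p hz₀ne
    have h1 : G z₀ = ψ z₀ * z₀ ^ p := by
      rw [hψeq z₀ hz₀ne, div_mul_cancel₀ _ hzp]
    rw [h1, norm_mul, norm_pow]
    calc ‖ψ z₀‖ * (‖z₀‖) ^ p
        ≤ ((s + t) / (1 + t * s)) * s ^ p := by
          apply mul_le_mul_of_nonneg_right hSP (by positivity)
      _ ≤ ((s + c) / (1 + c * s)) * s ^ p := by
          apply mul_le_mul_of_nonneg_right (my_mono2 hs0 hs1.le ht0 htc) (by positivity)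
      _ = T := by rw [hT]; ring
  have htanle : Real.tan (cπ * m) ≤ T := by
    have hre : ((cπ : ℂ) * F z₀).re = cπ * m := by
      rw [Complex.re_ofReal_mul, hFz₀re]
    have h0le : 0 ≤ ((cπ : ℂ) * F z₀).re := by
      rw [hre]; positivity
    have hlt : ((cπ : ℂ) * F z₀).re < π / 4 := by
      rw [hre, hcπ]; nlinarith
    have := my_tan_ge h0le hlt
    rw [hre] at this
    calc Real.tan (cπ * m) ≤ ‖Complex.tan ((cπ : ℂ) * F z₀)‖ := this
      _ = ‖G z₀‖ := rfl
      _ ≤ T := hGz₀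
  have harc : cπ * m ≤ Real.arctan T := by
    have hb1 : -(π/2) < cπ * m := by rw [hcπ]; nlinarith
    have hb2 : cπ * m < π/2 := by rw [hcπ]; nlinarith
    calc cπ * m = Real.arctan (Real.tan (cπ * m)) := (Real.arctan_tan hb1 hb2).symm
      _ ≤ Real.arctan T := Real.arctan_strictMono.monotone htanle
  have hfinal : m = (4 / π) * (cπ * m) := by
    rw [hcπ]; field_simp
  rw [hfinal]
  exact mul_le_mul_of_nonneg_left harc (by positivity)
end

section
/- Let w = h + conj(g) be a sense-preserving harmonic mapping of 𝔻 with w(𝔻) ⊆ 𝔻 and a zero of order p ≥ 1 at 0. Then for every z ∈ 𝔻, |w(z)| ≤ (4/π) arctan |z|^p. -/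
open Complex Metric Real

private lemma sq_abs_sin' (z : ℂ) :
    ‖Complex.sin z‖ ^ 2 = Real.sin z.re ^ 2 + Real.sinh z.im ^ 2 := by
  have h := Complex.sin_eq z
  have hre : (Complex.sin z).re = Real.sin z.re * Real.cosh z.im := by
    rw [h]; simp [← Complex.ofReal_sin, ← Complex.ofReal_cos, ← Complex.ofReal_sinh,
      ← Complex.ofReal_cosh]
  have him : (Complex.sin z).im = Real.cos z.re * Real.sinh z.im := by
    rw [h]; simp [← Complex.ofReal_sin, ← Complex.ofReal_cos, ← Complex.ofReal_sinh,
      ← Complex.ofReal_cosh]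
  rw [Complex.sq_norm, Complex.normSq_apply, hre, him]
  have h1 := Real.sin_sq_add_cos_sq z.re
  have h2 := Real.cosh_sq z.im
  nlinarith [Real.sinh_sq z.im]

private lemma sq_abs_cos' (z : ℂ) :
    ‖Complex.cos z‖ ^ 2 = Real.cos z.re ^ 2 + Real.sinh z.im ^ 2 := by
  have h := Complex.cos_eq z
  have hre : (Complex.cos z).re = Real.cos z.re * Real.cosh z.im := by
    rw [h]; simp [← Complex.ofReal_sin, ← Complex.ofReal_cos, ← Complex.ofReal_sinh,
      ← Complex.ofReal_cosh]
  have him : (Complex.cos z).im = -(Real.sin z.re * Real.sinh z.im) := by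
    rw [h]; simp [← Complex.ofReal_sin, ← Complex.ofReal_cos, ← Complex.ofReal_sinh,
      ← Complex.ofReal_cosh]
  rw [Complex.sq_norm, Complex.normSq_apply, hre, him]
  have h1 := Real.sin_sq_add_cos_sq z.re
  have h2 := Real.cosh_sq z.im
  nlinarith [Real.sinh_sq z.im]

private lemma cos_ne_zero_of_re' (z : ℂ) (hz : |z.re| < π/2) : Complex.cos z ≠ 0 := by
  intro hcz
  have h2 := sq_abs_cos' z
  rw [hcz] at h2
  simp only [norm_zero] at h2
  have hC : 0 < Real.cos z.re := by
    rcases abs_lt.mp hz with ⟨h1, h2'⟩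
    exact Real.cos_pos_of_mem_Ioo ⟨h1, h2'⟩
  nlinarith [sq_nonneg (Real.sinh z.im)]

private lemma sin_sq_lt_cos_sq' {x : ℝ} (hx : |x| < π/4) :
    Real.sin x ^ 2 < Real.cos x ^ 2 := by
  have hpi := Real.pi_pos
  have h2 : 0 < Real.cos (2 * x) := by
    apply Real.cos_pos_of_mem_Ioo
    rcases abs_lt.mp hx with ⟨h1, h2⟩
    constructor <;> [linarith; linarith]
  rw [Real.cos_two_mul'] at h2
  linarith

private lemma abs_tan_lt_one' {z : ℂ} (hz : |z.re| < π/4) :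
    ‖Complex.tan z‖ < 1 := by
  have hpi := Real.pi_pos
  have hsq : ‖Complex.tan z‖ ^ 2
      = (Real.sin z.re ^ 2 + Real.sinh z.im ^ 2) / (Real.cos z.re ^ 2 + Real.sinh z.im ^ 2) := by
    rw [Complex.tan_eq_sin_div_cos, norm_div, div_pow, sq_abs_sin' z, sq_abs_cos' z]
  have hlt := sin_sq_lt_cos_sq' hz
  have hC : 0 < Real.cos z.re := by
    apply Real.cos_pos_of_mem_Ioo
    rcases abs_lt.mp hz with ⟨h1, h2⟩
    constructor <;> [linarith; linarith]
  have hden : 0 < Real.cos z.re ^ 2 + Real.sinh z.im ^ 2 := by positivity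
  have h1 : ‖Complex.tan z‖ ^ 2 < 1 := by
    rw [hsq, div_lt_one hden]; linarith
  have h2 := (sq_lt_one_iff_abs_lt_one _).mp h1
  rwa [_root_.abs_of_nonneg (norm_nonneg _)] at h2

private lemma tan_re_le_abs_tan' {z : ℂ} (h0 : 0 ≤ z.re) (hz : z.re < π/4) :
    Real.tan z.re ≤ ‖Complex.tan z‖ := by
  have hpi := Real.pi_pos
  have habs : |z.re| < π/4 := by rw [_root_.abs_of_nonneg h0]; exact hz
  have hC : 0 < Real.cos z.re := by
    apply Real.cos_pos_of_mem_Ioo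
    constructor <;> [linarith; linarith]
  have hS : 0 ≤ Real.sin z.re := Real.sin_nonneg_of_nonneg_of_le_pi h0 (by linarith)
  have hsq : ‖Complex.tan z‖ ^ 2
      = (Real.sin z.re ^ 2 + Real.sinh z.im ^ 2) / (Real.cos z.re ^ 2 + Real.sinh z.im ^ 2) := by
    rw [Complex.tan_eq_sin_div_cos, norm_div, div_pow, sq_abs_sin' z, sq_abs_cos' z]
  have hlt := sin_sq_lt_cos_sq' habs
  have hden : 0 < Real.cos z.re ^ 2 + Real.sinh z.im ^ 2 := by positivity
  have hkey : Real.tan z.re ^ 2 ≤ ‖Complex.tan z‖ ^ 2 := by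
    rw [Real.tan_eq_sin_div_cos, hsq, div_pow, div_le_div_iff₀ (by positivity) hden]
    nlinarith [sq_nonneg (Real.sinh z.im)]
  have htnn : 0 ≤ Real.tan z.re := by
    rw [Real.tan_eq_sin_div_cos]; positivity
  nlinarith [norm_nonneg (Complex.tan z)]

/-- If the iterated derivatives of order `< n` of `f` vanish at `0`, then `f z = z ^ n * A z`
on the unit ball for some holomorphic `A`. -/
private lemma exists_factor (f : ℂ → ℂ) (n : ℕ) (hf : DifferentiableOn ℂ f (ball (0:ℂ) 1))
    (h0 : ∀ k < n, iteratedDeriv k f 0 = 0) :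
    ∃ A : ℂ → ℂ, DifferentiableOn ℂ A (ball (0:ℂ) 1) ∧
      ∀ z ∈ ball (0:ℂ) 1, f z = z ^ n * A z := by
  have h0m : (0:ℂ) ∈ ball (0:ℂ) 1 := by simp
  have hfa : AnalyticOnNhd ℂ f (ball (0:ℂ) 1) := hf.analyticOnNhd isOpen_ball
  obtain ⟨q, hq⟩ := hfa 0 h0m
  have hcoeff : ∀ k < n, q.coeff k = 0 := by
    intro k hk
    obtain ⟨r, hr⟩ := id hq
    have h1 := hr.factorial_smul (y := (1:ℂ)) k
    have h2 : iteratedFDeriv ℂ k f 0 (fun _ => (1:ℂ)) = 0 := by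
      rw [← iteratedDeriv_eq_iteratedFDeriv, h0 k hk]
    rw [h2, nsmul_eq_mul] at h1
    have hfac : (k.factorial : ℂ) ≠ 0 := by exact_mod_cast Nat.factorial_ne_zero k
    have h3 : q k (fun _ => (1:ℂ)) = 0 := by
      rcases mul_eq_zero.mp h1 with h | h
      · exact absurd h hfac
      · exact h
    exact h3
  set A : ℂ → ℂ := (Function.swap dslope 0)^[n] f with hA
  have hAz : ∀ k, AnalyticAt ℂ ((Function.swap dslope 0)^[k] f) 0 := fun k =>
    ⟨_, hq.has_fpower_series_iterate_dslope_fslope k⟩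
  have hAd : ∀ k, DifferentiableOn ℂ ((Function.swap dslope 0)^[k] f) (ball (0:ℂ) 1) := by
    intro k
    induction k with
    | zero => exact hf
    | succ k ih =>
      intro z hz
      rcases eq_or_ne z 0 with rfl | hne
      · exact ((hAz (k+1)).differentiableAt).differentiableWithinAt
      · rw [Function.iterate_succ_apply']
        refine DifferentiableAt.differentiableWithinAt ?_
        refine (differentiableAt_dslope_of_ne hne).mpr ?_
        exact (ih z hz).differentiableAt (isOpen_ball.mem_nhds hz)
  have hev : ∀ᶠ z in nhds (0:ℂ), f z = z ^ n * A z := by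
    have hq1 := hasFPowerSeriesAt_iff'.mp (hq.has_fpower_series_iterate_dslope_fslope n)
    filter_upwards [hq1, hasFPowerSeriesAt_iff'.mp hq] with x hx1 hx2
    simp only [sub_zero] at hx1 hx2
    obtain ⟨s, hs1, hs2⟩ := hx2.exists_hasSum_smul_of_apply_eq_zero hcoeff
    have hx1' : HasSum (fun m => x ^ m • q.coeff (m + n)) (A x) := by
      simpa [FormalMultilinearSeries.coeff_iterate_fslope] using hx1
    rw [hx1'.unique hs2, ← hs1, smul_eq_mul]
  have hAna : AnalyticOnNhd ℂ (fun z => z ^ n * A z) (ball (0:ℂ) 1) :=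
    (((differentiable_pow n).differentiableOn).mul (hAd n)).analyticOnNhd isOpen_ball
  exact ⟨A, hAd n, fun z hz =>
    hfa.eqOn_of_preconnected_of_eventuallyEq hAna (convex_ball (0:ℂ) 1).isPreconnected h0m hev hz⟩

/-- Maximum-principle step: if `|z ^ n * B z| ≤ 1` on the unit ball then `|B| ≤ 1`. -/
private lemma abs_le_one_of_pow_mul (B : ℂ → ℂ) (n : ℕ)
    (hB : DifferentiableOn ℂ B (ball (0:ℂ) 1))
    (hb : ∀ z ∈ ball (0:ℂ) 1, ‖z ^ n * B z‖ ≤ 1) :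
    ∀ z ∈ ball (0:ℂ) 1, ‖B z‖ ≤ 1 := by
  intro z hz
  have hz1 : ‖z‖ < 1 := by
    simpa using mem_ball_zero_iff.mp hz
  set m : ℝ := max (‖z‖) (1/2) with hm
  have hm1 : m < 1 := max_lt hz1 (by norm_num)
  have key : ∀ r ∈ Set.Ioo m 1, ‖B z‖ ≤ 1 / r ^ n := by
    intro r hr
    have hr0 : (0:ℝ) < r :=
      lt_of_le_of_lt (by norm_num) (lt_of_le_of_lt (le_max_right _ _) hr.1)
    have hrn : (0:ℝ) < r ^ n := by positivity
    have hsub : closedBall (0:ℂ) r ⊆ ball (0:ℂ) 1 := closedBall_subset_ball hr.2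
    have hC : ∀ w ∈ frontier (ball (0:ℂ) r), ‖B w‖ ≤ 1 / r ^ n := by
      intro w hw
      rw [frontier_ball (0:ℂ) hr0.ne'] at hw
      have hwr : ‖w‖ = r := by
        simpa using mem_sphere_zero_iff_norm.mp hw
      have hw1 : w ∈ ball (0:ℂ) 1 := by
        rw [mem_ball_zero_iff, hwr]; exact hr.2
      have hbw := hb w hw1
      rw [norm_mul, norm_pow, hwr] at hbw
      rw [le_div_iff₀ hrn]
      linarith
    have hd : DiffContOnCl ℂ B (ball (0:ℂ) r) := by
      constructor
      · exact hB.mono (ball_subset_ball hr.2.le)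
      · rw [closure_ball (0:ℂ) hr0.ne']
        exact (hB.continuousOn).mono hsub
    have hzc : z ∈ closure (ball (0:ℂ) r) := by
      rw [closure_ball (0:ℂ) hr0.ne', mem_closedBall_zero_iff]
      exact le_trans (le_max_left _ _) hr.1.le
    have := Complex.norm_le_of_forall_mem_frontier_norm_le isBounded_ball hd hC hzc
    simpa using this
  have ht : Filter.Tendsto (fun r : ℝ => 1 / r ^ n)
      (nhdsWithin 1 (Set.Iio 1)) (nhds 1) := by
    have h1 : Filter.Tendsto (fun r : ℝ => 1 / r ^ n) (nhds 1) (nhds (1 / 1 ^ n)) := by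
      apply Filter.Tendsto.div tendsto_const_nhds
      · exact (continuous_pow n).tendsto 1
      · norm_num
    simpa using h1.mono_left nhdsWithin_le_nhds
  refine ge_of_tendsto ht ?_
  filter_upwards [Ioo_mem_nhdsLT_of_mem (show (1:ℝ) ∈ Set.Ioc m 1 from ⟨hm1, le_refl 1⟩)]
    with r hr using key r hr

theorem harmonic_schwarz_order_p
    (h g : ℂ → ℂ) (p : ℕ) (hp : 1 ≤ p)
    (hh : DifferentiableOn ℂ h (ball (0:ℂ) 1))
    (hg : DifferentiableOn ℂ g (ball (0:ℂ) 1))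
    (hg0 : g 0 = 0)
    (hsp : ∀ z ∈ ball (0:ℂ) 1, ‖deriv g z‖ < ‖deriv h z‖)
    (hmaps : ∀ z ∈ ball (0:ℂ) 1, ‖h z + (starRingEnd ℂ) (g z)‖ < 1)
    (hzero : ∀ k < p, iteratedDeriv k h 0 = 0 ∧ iteratedDeriv k g 0 = 0)
    (horder : ‖iteratedDeriv p g 0‖ < ‖iteratedDeriv p h 0‖) :
    ∀ z ∈ ball (0:ℂ) 1,
      ‖h z + (starRingEnd ℂ) (g z)‖ ≤
        (4 / π) * Real.arctan (‖z‖ ^ p) := by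
  intro z₀ hz₀
  have hpi := Real.pi_pos
  have harct : 0 ≤ Real.arctan ((‖z₀‖) ^ p) := by
    rw [← Real.arctan_zero]
    exact Real.arctan_strictMono.monotone (by positivity)
  by_cases hw0 : h z₀ + (starRingEnd ℂ) (g z₀) = 0
  · rw [hw0, norm_zero]
    positivity
  -- main case
  set W : ℂ := h z₀ + (starRingEnd ℂ) (g z₀) with hW
  set a : ℝ := ‖W‖ with ha
  have ha0 : 0 < a := norm_pos_iff.mpr hw0
  have ha1 : a < 1 := hmaps z₀ hz₀
  set c : ℂ := (starRingEnd ℂ) W / (a : ℂ) with hc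
  have ha' : (a : ℂ) ≠ 0 := by exact_mod_cast ha0.ne'
  have hcw : c * W = (a : ℂ) := by
    have h1 : (starRingEnd ℂ) W * W = (a : ℂ) ^ 2 := by
      rw [mul_comm, Complex.mul_conj, Complex.normSq_eq_norm_sq, ← ha]
      push_cast; ring
    rw [hc, div_mul_eq_mul_div, h1, sq, mul_div_assoc, div_self ha', mul_one]
  have hc1 : ‖c‖ = 1 := by
    rw [hc, norm_div, Complex.norm_conj, ← ha]
    simp [Complex.norm_real, _root_.abs_of_pos ha0, div_self ha0.ne']
  set F : ℂ → ℂ := fun z => c * h z + (starRingEnd ℂ) c * g z with hF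
  have hFd : DifferentiableOn ℂ F (ball (0:ℂ) 1) :=
    (hh.const_mul c).add (hg.const_mul _)
  have hFre : ∀ z, (F z).re = (c * (h z + (starRingEnd ℂ) (g z))).re := by
    intro z
    have e1 : ((starRingEnd ℂ) c * g z).re = (c * (starRingEnd ℂ) (g z)).re := by
      rw [← Complex.conj_re ((starRingEnd ℂ) c * g z), map_mul, Complex.conj_conj]
    show (c * h z + (starRingEnd ℂ) c * g z).re = _
    rw [Complex.add_re, e1, ← Complex.add_re, ← mul_add]
  have hFlt : ∀ z ∈ ball (0:ℂ) 1, |(F z).re| < 1 := by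
    intro z hz
    rw [hFre z]
    calc |(c * (h z + (starRingEnd ℂ) (g z))).re|
        ≤ ‖c * (h z + (starRingEnd ℂ) (g z))‖ := Complex.abs_re_le_norm _
      _ = ‖h z + (starRingEnd ℂ) (g z)‖ := by rw [norm_mul, hc1, one_mul]
      _ < 1 := hmaps z hz
  obtain ⟨Ah, hAhd, hAh⟩ := exists_factor h p hh (fun k hk => (hzero k hk).1)
  obtain ⟨Ag, hAgd, hAg⟩ := exists_factor g p hg (fun k hk => (hzero k hk).2)
  set c4 : ℂ := ((π/4 : ℝ) : ℂ) with hc4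
  set τ : ℂ → ℂ := dslope Complex.tan 0 with hτ
  have htan : ∀ ζ : ℂ, Complex.tan ζ = ζ * τ ζ := by
    intro ζ
    have h1 := sub_smul_dslope Complex.tan 0 ζ
    rw [sub_zero, Complex.tan_zero, sub_zero, smul_eq_mul] at h1
    rw [← h1, hτ]
  have hre4 : ∀ z, (c4 * F z).re = π/4 * (F z).re := fun z => Complex.re_ofReal_mul _ _
  have habs4 : ∀ z ∈ ball (0:ℂ) 1, |(c4 * F z).re| < π/4 := by
    intro z hz
    rw [hre4 z, abs_mul, _root_.abs_of_pos (by positivity : (0:ℝ) < π/4)]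
    have := hFlt z hz
    nlinarith
  have hcos : ∀ z ∈ ball (0:ℂ) 1, Complex.cos (c4 * F z) ≠ 0 := by
    intro z hz
    exact cos_ne_zero_of_re' _ (lt_trans (habs4 z hz) (by linarith))
  set B : ℂ → ℂ := fun z => c4 * (c * Ah z + (starRingEnd ℂ) c * Ag z) * τ (c4 * F z) with hB
  have hBd : DifferentiableOn ℂ B (ball (0:ℂ) 1) := by
    apply DifferentiableOn.mul
    · exact ((hAhd.const_mul c).add (hAgd.const_mul _)).const_mul c4
    · intro z hz
      have hFz : DifferentiableAt ℂ F z := (hFd z hz).differentiableAt (isOpen_ball.mem_nhds hz)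
      have h4F : DifferentiableAt ℂ (fun y => c4 * F y) z := hFz.const_mul c4
      have hτd : DifferentiableAt ℂ τ (c4 * F z) := by
        rcases eq_or_ne (c4 * F z) 0 with h0 | h0
        · have hopen : IsOpen {ζ : ℂ | Complex.cos ζ ≠ 0} :=
            isOpen_compl_singleton.preimage Complex.continuous_cos
          have htand : DifferentiableOn ℂ Complex.tan {ζ : ℂ | Complex.cos ζ ≠ 0} :=
            fun ζ hζ => (Complex.differentiableAt_tan.mpr hζ).differentiableWithinAt
          have htana : AnalyticAt ℂ Complex.tan 0 := by
            refine (htand.analyticOnNhd hopen) 0 ?_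
            simp [Complex.cos_zero]
          obtain ⟨qt, hqt⟩ := htana
          have : AnalyticAt ℂ τ 0 := ⟨_, hqt.has_fpower_series_dslope_fslope⟩
          rw [h0]
          exact this.differentiableAt
        · exact (differentiableAt_dslope_of_ne h0).mpr
            (Complex.differentiableAt_tan.mpr (hcos z hz))
      exact (hτd.comp z h4F).differentiableWithinAt
  have hfact : ∀ z ∈ ball (0:ℂ) 1, Complex.tan (c4 * F z) = z ^ p * B z := by
    intro z hz
    have hFzf : F z = z ^ p * (c * Ah z + (starRingEnd ℂ) c * Ag z) := by
      show c * h z + (starRingEnd ℂ) c * g z = _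
      rw [hAh z hz, hAg z hz]; ring
    have hBz : B z = c4 * (c * Ah z + (starRingEnd ℂ) c * Ag z) * τ (c4 * F z) := rfl
    rw [htan (c4 * F z), hBz]
    calc (c4 * F z) * τ (c4 * F z)
        = c4 * (z ^ p * (c * Ah z + (starRingEnd ℂ) c * Ag z)) * τ (c4 * F z) := by
          rw [← hFzf]
      _ = z ^ p * (c4 * (c * Ah z + (starRingEnd ℂ) c * Ag z) * τ (c4 * F z)) := by ring
  have hle1 : ∀ z ∈ ball (0:ℂ) 1, ‖z ^ p * B z‖ ≤ 1 := by
    intro z hz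
    rw [← hfact z hz]
    exact (abs_tan_lt_one' (habs4 z hz)).le
  have hBle := abs_le_one_of_pow_mul B p hBd hle1 z₀ hz₀
  have hre0 : (F z₀).re = a := by
    rw [hFre z₀, ← hW, hcw, Complex.ofReal_re]
  have hretop : (c4 * F z₀).re = π/4 * a := by rw [hre4, hre0]
  have h0le : 0 ≤ (c4 * F z₀).re := by rw [hretop]; positivity
  have hlt4 : (c4 * F z₀).re < π/4 := by rw [hretop]; nlinarith
  have hkey : Real.tan (π/4 * a) ≤ (‖z₀‖) ^ p := by
    have h1 := tan_re_le_abs_tan' h0le hlt4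
    rw [hretop] at h1
    have h2 : ‖Complex.tan (c4 * F z₀)‖ ≤ (‖z₀‖) ^ p := by
      rw [hfact z₀ hz₀, norm_mul, norm_pow]
      calc (‖z₀‖) ^ p * ‖B z₀‖
          ≤ (‖z₀‖) ^ p * 1 :=
            mul_le_mul_of_nonneg_left hBle (by positivity)
        _ = (‖z₀‖) ^ p := mul_one _
    linarith
  have h4 : π/4 * a ≤ Real.arctan ((‖z₀‖) ^ p) := by
    have harc := Real.arctan_strictMono.monotone hkey
    rwa [Real.arctan_tan (by nlinarith) (by nlinarith)] at harc
  calc a = 4/π * (π/4 * a) := by field_simp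
    _ ≤ 4/π * Real.arctan ((‖z₀‖) ^ p) :=
        mul_le_mul_of_nonneg_left h4 (by positivity)
    _ = (4/π) * Real.arctan ((‖z₀‖) ^ p) := rfl
end

section
/- Suppose f : 𝔻 → 𝔻 is analytic with f(0) = 0, and f extends complex-differentiably to z = α with |α| = 1 and f(α) = β, |β| = 1. Then Re(conj(β)·f'(α)·α) ≥ 1, and equality holds if and only if f(z) = (β/α)·z for all z. -/
open Complex Metric Real

-- Part 1: boundary Schwarz lower bound
theorem bsa_main (f : ℂ → ℂ) (hf : DifferentiableOn ℂ f (ball (0:ℂ) 1))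
    (hmaps : Set.MapsTo f (ball (0:ℂ) 1) (ball (0:ℂ) 1)) (hf0 : f 0 = 0)
    (α β : ℂ) (hα : ‖α‖ = 1) (hβ : ‖β‖ = 1)
    (hfα : AnalyticAt ℂ f α) (hfval : f α = β) :
    1 ≤ ((starRingEnd ℂ) β * deriv f α * α).re := by
  have hd : HasDerivAt f (deriv f α) α := hfα.differentiableAt.hasDerivAt
  have hline : HasDerivAt (fun t : ℝ => (t : ℂ) * α) α 1 := by
    simpa using (Complex.ofRealCLM.hasDerivAt (x := (1:ℝ))).mul_const α
  have hcomp : HasDerivAt (fun t : ℝ => f ((t : ℂ) * α)) (α • deriv f α) 1 := by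
    have := HasDerivAt.scomp (𝕜 := ℝ) (𝕜' := ℂ) (x := (1:ℝ))
      (by simpa using hd : HasDerivAt f (deriv f α) ((1:ℝ) * α)) hline
    simpa [Function.comp_def] using this
  have hmul : HasDerivAt (fun t : ℝ => (starRingEnd ℂ) β * f ((t : ℂ) * α))
      ((starRingEnd ℂ) β * (α • deriv f α)) 1 := hcomp.const_mul _
  have hre : HasDerivAt (fun t : ℝ => ((starRingEnd ℂ) β * f ((t : ℂ) * α)).re)
      (((starRingEnd ℂ) β * (α • deriv f α)).re) 1 :=
    Complex.reCLM.hasFDerivAt.comp_hasDerivAt 1 hmul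
  have key : 1 ≤ ((starRingEnd ℂ) β * (α • deriv f α)).re := by
    have htend := hasDerivAt_iff_tendsto_slope.1 hre
    have htend' := htend.mono_left (nhdsWithin_mono 1 (fun x hx => ne_of_lt hx : Set.Iio (1:ℝ) ⊆ {(1:ℝ)}ᶜ))
    refine ge_of_tendsto htend' ?_
    filter_upwards [Ioo_mem_nhdsLT_of_mem (Set.mem_Ioc.2 ⟨(by norm_num : (0:ℝ) < 1), le_refl 1⟩)]
      with t ht
    obtain ⟨ht0, ht1⟩ := ht
    have hfab : ‖f ((t:ℂ) * α)‖ ≤ t := by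
      have : ‖(t:ℂ) * α‖ < 1 := by
        rw [norm_mul, hα, mul_one, Complex.norm_real, Real.norm_eq_abs, abs_of_pos ht0]; exact ht1
      calc ‖f ((t:ℂ) * α)‖ ≤ ‖(t:ℂ)*α‖ :=
            Complex.norm_le_norm_of_mapsTo_ball hf (hmaps.mono_right ball_subset_closedBall) hf0 this
        _ = t := by rw [norm_mul, hα, mul_one, Complex.norm_real, Real.norm_eq_abs, abs_of_pos ht0]
    have hφt : ((starRingEnd ℂ) β * f ((t:ℂ) * α)).re ≤ t := by
      calc ((starRingEnd ℂ) β * f ((t:ℂ) * α)).re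
          ≤ ‖(starRingEnd ℂ) β * f ((t:ℂ) * α)‖ := Complex.re_le_norm _
        _ = ‖f ((t:ℂ)*α)‖ := by rw [norm_mul, Complex.norm_conj, hβ, one_mul]
        _ ≤ t := hfab
    have h1 : ((starRingEnd ℂ) β * f (((1:ℝ):ℂ) * α)).re = 1 := by
      simp only [Complex.ofReal_one, one_mul, hfval]
      simp [Complex.mul_conj', Complex.normSq_eq_norm_sq, hβ, Complex.conj_mul']
    rw [slope_def_field, h1, le_div_iff_of_neg (by linarith : t - 1 < 0)]
    linarith
  calc (1:ℝ) ≤ _ := key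
    _ = ((starRingEnd ℂ) β * deriv f α * α).re := by rw [smul_eq_mul]; ring_nf

theorem bsa_ext (f : ℂ → ℂ) (α : ℂ) (hα : ‖α‖ = 1) (hfα : AnalyticAt ℂ f α)
    (k : ℂ) (heq : Set.EqOn f (fun z => k * z) (ball (0:ℂ) 1)) :
    f α = k * α ∧ deriv f α = k := by
  obtain ⟨r, hr, hball⟩ : ∃ r > 0, AnalyticOnNhd ℂ f (ball α r) := by
    have h := hfα.eventually_analyticAt
    rw [Metric.eventually_nhds_iff_ball] at h
    obtain ⟨r, hr, h⟩ := h
    exact ⟨r, hr, fun z hz => h z hz⟩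
  set s := min r 1 / 2 with hs
  have hs0 : 0 < s := by positivity
  have hsr : s < r := by
    have : min r 1 ≤ r := min_le_left _ _
    simp only [hs]; linarith
  have hs1 : s < 1 := by
    have : min r 1 ≤ 1 := min_le_right _ _
    simp only [hs]; linarith
  set z₀ : ℂ := ((1 - s : ℝ) : ℂ) * α with hz₀
  have hz₀ball : z₀ ∈ ball (0:ℂ) 1 := by
    rw [mem_ball_zero_iff, hz₀]
    simp only [norm_mul, hα, mul_one, Complex.norm_real, Real.norm_eq_abs]
    rw [abs_of_pos (by linarith : (0:ℝ) < 1 - s)]; linarith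
  have hz₀r : z₀ ∈ ball α r := by
    rw [mem_ball_iff_norm, hz₀]
    have : ((1 - s : ℝ) : ℂ) * α - α = ((-s : ℝ) : ℂ) * α := by push_cast; ring
    rw [this]
    simp only [norm_mul, hα, mul_one, Complex.norm_real, Real.norm_eq_abs]
    rw [abs_of_neg (by linarith : (-s:ℝ) < 0)]; linarith
  have hg : AnalyticOnNhd ℂ (fun z => k * z) (ball α r) :=
    fun z _ => (analyticAt_const.mul analyticAt_id)
  have hev : f =ᶠ[nhds z₀] (fun z => k * z) := by
    refine Filter.eventuallyEq_iff_exists_mem.2 ⟨ball (0:ℂ) 1 ∩ ball α r, ?_, fun z hz => heq hz.1⟩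
    exact (isOpen_ball.inter isOpen_ball).mem_nhds ⟨hz₀ball, hz₀r⟩
  have heqball : Set.EqOn f (fun z => k * z) (ball α r) :=
    hball.eqOn_of_preconnected_of_eventuallyEq hg (convex_ball α r).isPreconnected hz₀r hev
  have hαr : α ∈ ball α r := mem_ball_self hr
  refine ⟨heqball hαr, ?_⟩
  have hevα : f =ᶠ[nhds α] (fun z => k * z) :=
    Filter.eventuallyEq_iff_exists_mem.2 ⟨ball α r, isOpen_ball.mem_nhds hαr, heqball⟩
  rw [hevα.deriv_eq]
  simpa using ((hasDerivAt_id α).const_mul k).deriv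

theorem bsa_mobius (a w : ℂ) (ha : ‖a‖ < 1) (hw : ‖w‖ < 1) :
    ‖(w - a) / (1 - (starRingEnd ℂ) a * w)‖ < 1 := by
  have habs : ‖(starRingEnd ℂ) a * w‖ < 1 := by
    rw [norm_mul, Complex.norm_conj]
    nlinarith [norm_nonneg a, norm_nonneg w]
  have hden : (1 : ℂ) - (starRingEnd ℂ) a * w ≠ 0 := by
    intro h
    have h1 : (starRingEnd ℂ) a * w = 1 := by linear_combination -h
    rw [h1] at habs; simp at habs
  have ha2 : Complex.normSq a < 1 := by
    rw [← Complex.sq_norm]; nlinarith [norm_nonneg a]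
  have hw2 : Complex.normSq w < 1 := by
    rw [← Complex.sq_norm]; nlinarith [norm_nonneg w]
  have key : Complex.normSq (w - a) < Complex.normSq (1 - (starRingEnd ℂ) a * w) := by
    have h1 : Complex.normSq (1 - (starRingEnd ℂ) a * w) - Complex.normSq (w - a)
        = (1 - Complex.normSq a) * (1 - Complex.normSq w) := by
      simp only [Complex.normSq_apply, Complex.sub_re, Complex.sub_im, Complex.mul_re,
        Complex.mul_im, Complex.conj_re, Complex.conj_im, Complex.one_re, Complex.one_im]
      ring
    nlinarith
  rw [norm_div, div_lt_one (norm_pos_iff.2 hden)]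
  rw [Complex.norm_def, Complex.norm_def]
  exact Real.sqrt_lt_sqrt (Complex.normSq_nonneg _) key
theorem boundary_schwarz_analytic
    (f : ℂ → ℂ)
    (hf : DifferentiableOn ℂ f (ball (0:ℂ) 1))
    (hmaps : ∀ z ∈ ball (0:ℂ) 1, f z ∈ ball (0:ℂ) 1)
    (hf0 : f 0 = 0)
    (α β : ℂ) (hα : ‖α‖ = 1) (hβ : ‖β‖ = 1)
    (hfα : AnalyticAt ℂ f α) (hfval : f α = β) :
    1 ≤ ((starRingEnd ℂ) β * deriv f α * α).re ∧
      (((starRingEnd ℂ) β * deriv f α * α).re = 1 ↔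
        Set.EqOn f (fun z => (β / α) * z) (ball (0:ℂ) 1)) := by
  have hmapsTo : Set.MapsTo f (ball (0:ℂ) 1) (ball (0:ℂ) 1) := hmaps
  have hα0 : α ≠ 0 := by intro h; rw [h] at hα; simp at hα
  have hβ0 : β ≠ 0 := by intro h; rw [h] at hβ; simp at hβ
  have part1 := bsa_main f hf hmapsTo hf0 α β hα hβ hfα hfval
  have hconjα : (starRingEnd ℂ) α * α = 1 := by
    rw [mul_comm, Complex.mul_conj, ← Complex.sq_norm, hα]; norm_num
  have hconjβ : (starRingEnd ℂ) β * β = 1 := by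
    rw [mul_comm, Complex.mul_conj, ← Complex.sq_norm, hβ]; norm_num
  refine ⟨part1, ?_, ?_⟩
  · -- forward direction
    intro heq1
    set c : ℂ := β / α with hc
    have hcabs : ‖c‖ = 1 := by rw [hc, norm_div, hα, hβ]; norm_num
    have hc0 : c ≠ 0 := div_ne_zero hβ0 hα0
    set h : ℂ → ℂ := dslope f 0 with hhdef
    have hhle : ∀ z ∈ ball (0:ℂ) 1, ‖h z‖ ≤ 1 := by
      intro z hz
      have := Complex.norm_dslope_le_div_of_mapsTo_ball hf (by rw [hf0]; exact hmapsTo.mono_right ball_subset_closedBall) hz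
      simpa using this
    have hhdiff : DifferentiableOn ℂ h (ball (0:ℂ) 1) :=
      (differentiableOn_dslope (isOpen_ball.mem_nhds (mem_ball_self one_pos))).2 hf
    have hfz : ∀ z : ℂ, z ≠ 0 → f z = z * h z := by
      intro z hz
      rw [hhdef, dslope_of_ne f hz, slope_def_field, hf0]
      field_simp
      ring
    have hev : h =ᶠ[nhds α] (fun z => f z / z) := by
      filter_upwards [isOpen_compl_singleton.mem_nhds (hα0 : α ∈ ({0}ᶜ : Set ℂ))] with z hz
      rw [hfz z hz, mul_comm z (h z), mul_div_assoc, div_self hz, mul_one]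
    have hhα : AnalyticAt ℂ h α := ((hfα.div analyticAt_id hα0)).congr hev.symm
    have hhval : h α = c := by
      rw [hev.eq_of_nhds, hfval, hc]
    have hderivh : deriv h α = (deriv f α * α - β) / α ^ 2 := by
      rw [hev.deriv_eq]
      have hd : HasDerivAt f (deriv f α) α := hfα.differentiableAt.hasDerivAt
      have h1 := hd.div (hasDerivAt_id α) hα0
      simp only [id_eq] at h1
      rw [hfval, mul_one] at h1
      have h2 : HasDerivAt (fun z => f z / z) ((deriv f α * α - β) / α ^ 2) α := h1
      exact h2.deriv
    -- key: Re(conj c * deriv h α * α) = 0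
    have hmain : (starRingEnd ℂ) c * deriv h α * α = (starRingEnd ℂ) β * deriv f α * α - 1 := by
      have hca : (starRingEnd ℂ) α = α⁻¹ := eq_inv_of_mul_eq_one_left hconjα
      have hcb : (starRingEnd ℂ) β = β⁻¹ := eq_inv_of_mul_eq_one_left hconjβ
      rw [hderivh, hc, map_div₀, hca, hcb]
      field_simp
    have hre0 : ((starRingEnd ℂ) c * deriv h α * α).re = 0 := by
      rw [hmain, Complex.sub_re, heq1]; simp
    by_cases hconst : ∃ z₀ ∈ ball (0:ℂ) 1, ‖h z₀‖ = 1
    · -- h is constant, f = k z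
      obtain ⟨z₀, hz₀, habs1⟩ := hconst
      have hmax : IsMaxOn (norm ∘ h) (ball (0:ℂ) 1) z₀ := by
        intro z hz
        simp only [Function.comp_apply, Set.mem_setOf_eq, habs1]
        exact hhle z hz
      have hconst' : ∀ z ∈ ball (0:ℂ) 1, h z = h z₀ := fun z hz =>
        Complex.eqOn_of_isPreconnected_of_isMaxOn_norm (convex_ball (0:ℂ) 1).isPreconnected
          isOpen_ball hhdiff hz₀ hmax hz
      set k := h z₀ with hk
      have heqf : Set.EqOn f (fun z => k * z) (ball (0:ℂ) 1) := by
        intro z hz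
        by_cases hz0 : z = 0
        · simp [hz0, hf0]
        · rw [hfz z hz0, hconst' z hz]; ring
      have := (bsa_ext f α hα hfα k heqf).1
      have hkc : k = c := by
        rw [hfval] at this
        rw [hc]
        field_simp [this]
        exact this.symm
      rw [← hkc]
      exact heqf
    · -- h nonconstant: strict bound, contradiction
      exfalso
      push_neg at hconst
      have hhlt : ∀ z ∈ ball (0:ℂ) 1, ‖h z‖ < 1 := fun z hz =>
        lt_of_le_of_ne (hhle z hz) (hconst z hz)
      set H : ℂ → ℂ := fun z => (starRingEnd ℂ) c * h z with hH
      have hHabs : ∀ z ∈ ball (0:ℂ) 1, ‖H z‖ < 1 := by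
        intro z hz
        rw [hH]
        simp only [norm_mul, Complex.norm_conj, hcabs, one_mul]
        exact hhlt z hz
      set a : ℂ := H 0 with ha
      have haabs : ‖a‖ < 1 := hHabs 0 (mem_ball_self one_pos)
      have ha2 : Complex.normSq a < 1 := by
        rw [← Complex.sq_norm]; nlinarith [norm_nonneg a]
      have h1a : (1 : ℂ) - a ≠ 0 := by
        intro hh
        have : a = 1 := by linear_combination -hh
        rw [this] at haabs; simp at haabs
      have h1ca : (1 : ℂ) - (starRingEnd ℂ) a ≠ 0 := by
        intro hh
        have : (starRingEnd ℂ) a = 1 := by linear_combination -hh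
        have : a = 1 := by
          have := congrArg (starRingEnd ℂ) this
          simpa using this
        rw [this] at haabs; simp at haabs
      have hdenne : ∀ z ∈ ball (0:ℂ) 1, (1 : ℂ) - (starRingEnd ℂ) a * H z ≠ 0 := by
        intro z hz hh
        have h1 : (starRingEnd ℂ) a * H z = 1 := by linear_combination -hh
        have : ‖(starRingEnd ℂ) a * H z‖ = 1 := by rw [h1]; simp
        rw [norm_mul, Complex.norm_conj] at this
        nlinarith [norm_nonneg a, norm_nonneg (H z), hHabs z hz]
      set G : ℂ → ℂ := fun z => (H z - a) / (1 - (starRingEnd ℂ) a * H z) with hG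
      have hHdiff : DifferentiableOn ℂ H (ball (0:ℂ) 1) :=
        hhdiff.const_mul _
      have hGdiff : DifferentiableOn ℂ G (ball (0:ℂ) 1) := by
        exact ((hHdiff.sub (differentiableOn_const a)).div
          ((differentiableOn_const 1).sub ((differentiableOn_const _).mul hHdiff)) hdenne)
      have hGmaps : Set.MapsTo G (ball (0:ℂ) 1) (ball (0:ℂ) 1) := by
        intro z hz
        rw [mem_ball_zero_iff]
        exact bsa_mobius a (H z) haabs (hHabs z hz)
      have hG0 : G 0 = 0 := by
        rw [hG]; simp [← ha]
      have hHα : AnalyticAt ℂ H α := analyticAt_const.mul hhα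
      have hHval : H α = 1 := by
        rw [hH]; simp only [hhval]
        rw [mul_comm, Complex.mul_conj, ← Complex.sq_norm, hcabs]; norm_num
      have hdenα : (1 : ℂ) - (starRingEnd ℂ) a * H α ≠ 0 := by
        rw [hHval, mul_one]; exact h1ca
      have hGα : AnalyticAt ℂ G α :=
        (hHα.sub analyticAt_const).div (analyticAt_const.sub (analyticAt_const.mul hHα)) hdenα
      set β' : ℂ := (1 - a) / (1 - (starRingEnd ℂ) a) with hβ'
      have hGval : G α = β' := by
        simp only [hG, hβ']
        rw [hHval, mul_one]
      have hβ'abs : ‖β'‖ = 1 := by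
        rw [hβ', norm_div]
        have h2 : ‖1 - (starRingEnd ℂ) a‖ = ‖1 - a‖ := by
          have h3 : (1:ℂ) - (starRingEnd ℂ) a = (starRingEnd ℂ) (1 - a) := by
            rw [map_sub, map_one]
          rw [h3, Complex.norm_conj]
        rw [h2, div_self (norm_ne_zero_iff.2 h1a)]
      -- derivative of G at α
      set W : ℂ := (starRingEnd ℂ) c * deriv h α with hW
      have hHd : HasDerivAt H W α := by
        rw [hW]
        exact (hhα.differentiableAt.hasDerivAt).const_mul _
      have hGd : HasDerivAt G ((W * (1 - (starRingEnd ℂ) a * H α) - (H α - a) * (-((starRingEnd ℂ) a) * W)) / (1 - (starRingEnd ℂ) a * H α) ^ 2) α := by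
        have hnum : HasDerivAt (fun z => H z - a) W α := hHd.sub_const a
        have hden : HasDerivAt (fun z => (1:ℂ) - (starRingEnd ℂ) a * H z) (-((starRingEnd ℂ) a) * W) α := by
          have := (hHd.const_mul ((starRingEnd ℂ) a)).const_sub 1
          rw [neg_mul]
          exact this
        exact hnum.div hden hdenα
      have hGderiv : deriv G α = W * (1 - Complex.normSq a) / (1 - (starRingEnd ℂ) a) ^ 2 := by
        rw [hGd.deriv, hHval]
        rw [Complex.normSq_eq_conj_mul_self]
        field_simp
        ring
      have hbound := bsa_main G hGdiff hGmaps hG0 α β' hα hβ'abs hGα hGval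
      -- compute conj β' * deriv G α * α
      have hK : ((starRingEnd ℂ) β' * deriv G α * α) =
          (((1 - Complex.normSq a) / Complex.normSq (1 - a) : ℝ) : ℂ) * (W * α) := by
        have hn1 : ((Complex.normSq a : ℝ) : ℂ) = (starRingEnd ℂ) a * a :=
          Complex.normSq_eq_conj_mul_self
        have hn2 : ((Complex.normSq (1 - a) : ℝ) : ℂ) = (1 - (starRingEnd ℂ) a) * (1 - a) := by
          rw [Complex.normSq_eq_conj_mul_self, map_sub, map_one]
        rw [hGderiv, hβ', map_div₀]
        simp only [map_sub, map_one, Complex.conj_conj]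
        rw [Complex.ofReal_div, Complex.ofReal_sub, Complex.ofReal_one, hn1, hn2]
        field_simp
      have hrfinal : ((starRingEnd ℂ) β' * deriv G α * α).re = 0 := by
        rw [hK, Complex.re_ofReal_mul]
        have h5 : W * α = (starRingEnd ℂ) c * deriv h α * α := by rw [hW]
        rw [h5, hre0, mul_zero]
      rw [hrfinal] at hbound
      linarith
  · -- reverse direction
    intro heqf
    obtain ⟨hfa, hder⟩ := bsa_ext f α hα hfα (β / α) heqf
    rw [hder]
    have h6 : (starRingEnd ℂ) β * (β / α) * α = (starRingEnd ℂ) β * β := by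
      field_simp
    rw [h6, hconjβ]
    simp
end
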